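/- Let 𝒜 be the noncrossing algebra of a finite Coxeter group W with Coxeter element γ, and for 1 ≤ k ≤ n define the ℤ-linear maps d, δ : 𝒜_k → 𝒜_{k−1} by d(a_{t₁}⋯a_{t_k}) = Σ_{i=1}^k (−1)^{k−i} a_{t₁}⋯â_{t_i}⋯a_{t_k} and δ(a_{t₁}⋯a_{t_k}) = Σ_{i=1}^k (−1)^{i−1} a_{t₁^{t_i}}⋯a_{t_{i−1}^{t_i}} â_{t_i} a_{t_{i+1}}⋯a_{t_k} (hat means omission, s^u := u⁻¹su). Then d and δ are well-defined, d² = 0, δ² = 0, and d δ = δ d. -/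

import Mathlib

open scoped Classical

open scoped Classical

/-- The absolute (reflection) length of `w`. -/
noncomputable def absLen {B : Type*} {W : Type*} [Group W] {M : CoxeterMatrix B}
    (cs : CoxeterSystem M W) (w : W) : ℕ :=
  sInf {k : ℕ | ∃ l : List W, (∀ t ∈ l, cs.IsReflection t) ∧ l.length = k ∧ l.prod = w}

/-- The absolute order on `W`: `u ≤ v` iff `ℓ_T(v) = ℓ_T(u) + ℓ_T(u⁻¹v)`. -/
def absLe {B : Type*} {W : Type*} [Group W] {M : CoxeterMatrix B}
    (cs : CoxeterSystem M W) (u v : W) : Prop :=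
  absLen cs v = absLen cs u + absLen cs (u⁻¹ * v)

namespace NCAux

variable {B : Type*} {W : Type*} [Group W] {M : CoxeterMatrix B} (cs : CoxeterSystem M W)

lemma absLen_le {w : W} {l : List W} (h : ∀ t ∈ l, cs.IsReflection t) (hp : l.prod = w) :
    absLen cs w ≤ l.length :=
  Nat.sInf_le ⟨l, h, rfl, hp⟩

lemma absLen_exists (w : W) :
    ∃ l : List W, (∀ t ∈ l, cs.IsReflection t) ∧ l.length = absLen cs w ∧ l.prod = w := by
  have hne : {k : ℕ | ∃ l : List W, (∀ t ∈ l, cs.IsReflection t) ∧ l.length = k ∧ l.prod = w}.Nonempty := by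
    obtain ⟨ω, rfl⟩ := cs.wordProd_surjective w
    exact ⟨ω.length, ω.map cs.simple, by
      simp only [List.mem_map]
      rintro t ⟨i, _, rfl⟩
      exact cs.isReflection_simple i, by simp, rfl⟩
  exact Nat.sInf_mem hne

lemma absLen_one : absLen cs (1 : W) = 0 :=
  Nat.le_zero.mp (absLen_le cs (l := []) (by simp) rfl)

lemma absLen_mul_le (x y : W) : absLen cs (x * y) ≤ absLen cs x + absLen cs y := by
  obtain ⟨l1, h1, hl1, hp1⟩ := absLen_exists cs x
  obtain ⟨l2, h2, hl2, hp2⟩ := absLen_exists cs y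
  have := absLen_le cs (l := l1 ++ l2) (by
    intro t ht; rcases List.mem_append.mp ht with h | h
    exacts [h1 t h, h2 t h]) (by rw [List.prod_append, hp1, hp2])
  simpa [hl1, hl2] using this

lemma absLen_eq_zero {w : W} : absLen cs w = 0 ↔ w = 1 := by
  constructor
  · intro h
    obtain ⟨l, _, hl, hp⟩ := absLen_exists cs w
    rw [h, List.length_eq_zero_iff] at hl
    simpa [hl] using hp.symm
  · rintro rfl; exact absLen_one cs

lemma absLen_refl {t : W} (h : cs.IsReflection t) : absLen cs t = 1 := by
  have h1 : absLen cs t ≤ 1 := absLen_le cs (l := [t]) (by simpa using h) (by simp)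
  have h0 : absLen cs t ≠ 0 := by
    rw [Ne, absLen_eq_zero cs]
    intro ht
    have := h.odd_length (cs := cs)
    rw [ht] at this
    simp at this
  omega

lemma absLen_conj_le (u w : W) : absLen cs (u⁻¹ * w * u) ≤ absLen cs w := by
  obtain ⟨l, h, hl, hp⟩ := absLen_exists cs w
  have hprod : (l.map (fun t => u⁻¹ * t * u)).prod = u⁻¹ * w * u := by
    have he : (fun t : W => u⁻¹ * t * u) = fun t => (MulAut.conj u⁻¹ : W →* W) t := by
      funext t; simp [MulAut.conj]
    rw [he, List.prod_hom, ← hp]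
    simp [MulAut.conj]
  have := absLen_le cs (w := u⁻¹ * w * u) (l := l.map (fun t => u⁻¹ * t * u)) (by
    simp only [List.mem_map]
    rintro t ⟨s, hs, rfl⟩
    have := (h s hs).conj u⁻¹
    simpa using this) hprod
  simpa [hl] using this

lemma absLen_conj (u w : W) : absLen cs (u⁻¹ * w * u) = absLen cs w := by
  refine le_antisymm (absLen_conj_le cs u w) ?_
  have := absLen_conj_le cs u⁻¹ (u⁻¹ * w * u)
  simpa [mul_assoc] using this

lemma absLen_inv (w : W) : absLen cs w⁻¹ = absLen cs w := by
  have key : ∀ v : W, absLen cs v⁻¹ ≤ absLen cs v := by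
    intro v
    obtain ⟨l, h, hl, hp⟩ := absLen_exists cs v
    have hprod : l.reverse.prod = v⁻¹ := by
      rw [List.prod_reverse_noncomm, ← hp]
      congr 1
      conv_rhs => rw [← List.map_id l]
      exact congrArg List.prod (List.map_congr_left fun t ht => (h t ht).inv)
    have := absLen_le cs (w := v⁻¹) (l := l.reverse) (by
      intro t ht; exact h t (List.mem_reverse.mp ht)) hprod
    simpa [hl] using this
  exact le_antisymm (key w) (by simpa using key w⁻¹)

end NCAux
/-- The set of reflections of a Coxeter system, as a type. -/
abbrev Refl {B : Type*} {W : Type*} [Group W] {M : CoxeterMatrix B}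
    (cs : CoxeterSystem M W) : Type _ := {t : W // cs.IsReflection t}

/-- Conjugation `s^u := u⁻¹ s u` of a reflection by a group element. -/
def conjR {B : Type*} {W : Type*} [Group W] {M : CoxeterMatrix B}
    {cs : CoxeterSystem M W} (s : Refl cs) (u : W) : Refl cs :=
  ⟨u⁻¹ * (s : W) * u, by have := s.2.conj u⁻¹; rwa [inv_inv] at this⟩

/-- The monomial `a_{t₁} ⋯ a_{t_k}` in the free algebra over `ℤ`. -/
noncomputable def mono {B : Type*} {W : Type*} [Group W] {M : CoxeterMatrix B}
    (cs : CoxeterSystem M W) (l : List (Refl cs)) : FreeAlgebra ℤ (Refl cs) :=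
  (l.map (FreeAlgebra.ι ℤ)).prod

/-- A list of reflections is *noncrossing-reduced* if it is a `T`-reduced word for its
product and this product is `≤ γ` in the absolute order. -/
def IsNCWord {B : Type*} {W : Type*} [Group W] {M : CoxeterMatrix B}
    (cs : CoxeterSystem M W) (γ : W) (l : List (Refl cs)) : Prop :=
  absLen cs ((l.map Subtype.val).prod) = l.length ∧
    absLe cs ((l.map Subtype.val).prod) γ

namespace NCAux

variable {B : Type*} {W : Type*} [Group W] {M : CoxeterMatrix B} (cs : CoxeterSystem M W)

/-- Product of a list of reflections. -/
def pr (l : List (Refl cs)) : W := (l.map Subtype.val).prod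

@[simp] lemma pr_nil : pr cs ([] : List (Refl cs)) = 1 := rfl
@[simp] lemma pr_cons (t : Refl cs) (l : List (Refl cs)) :
    pr cs (t :: l) = (t : W) * pr cs l := by simp [pr]
@[simp] lemma pr_append (u v : List (Refl cs)) :
    pr cs (u ++ v) = pr cs u * pr cs v := by simp [pr]

lemma pr_le_length (l : List (Refl cs)) : absLen cs (pr cs l) ≤ l.length := by
  have := absLen_le cs (w := pr cs l) (l := l.map Subtype.val) (by
    simp only [List.mem_map]
    rintro t ⟨s, _, rfl⟩
    exact s.2) rfl
  simpa using this

/-- conjugated list -/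
def cmap (u : W) (l : List (Refl cs)) : List (Refl cs) :=
  l.map (fun s => conjR s u)

@[simp] lemma pr_cmap (u : W) (l : List (Refl cs)) :
    pr cs (cmap cs u l) = u⁻¹ * pr cs l * u := by
  induction l with
  | nil => simp [cmap]
  | cons t l ih =>
      simp only [cmap, List.map_cons, pr_cons] at *
      rw [ih]
      simp [conjR]
      group

@[simp] lemma length_cmap (u : W) (l : List (Refl cs)) :
    (cmap cs u l).length = l.length := by simp [cmap]

lemma conjR_conjR (s x : Refl cs) (u : W) :
    conjR (conjR s u) ((conjR x u : Refl cs) : W) = conjR (conjR s x) u := by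
  apply Subtype.ext
  simp [conjR]
  group

lemma IsNC_nil {γ : W} (hγle : True) : True := trivial

variable {γ : W}

lemma isNCWord_iff (l : List (Refl cs)) :
    IsNCWord cs γ l ↔ (absLen cs (pr cs l) = l.length ∧
      absLen cs γ = absLen cs (pr cs l) + absLen cs ((pr cs l)⁻¹ * γ)) := Iff.rfl

/-- `δᵢ` operation on lists, with natural-number index. -/
noncomputable def delIdxN (l : List (Refl cs)) (i : ℕ) : List (Refl cs) :=
  match l.drop i with
  | [] => []
  | x :: rest => (l.take i).map (fun s => conjR s (x : W)) ++ rest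

lemma drop_eq_cons {α : Type*} (l : List α) {i : ℕ} (h : i < l.length) :
    l.drop i = l.get ⟨i, h⟩ :: l.drop (i + 1) := by
  rw [List.drop_eq_getElem_cons h]
  rfl

lemma delIdxN_eq (l : List (Refl cs)) {i : ℕ} (h : i < l.length) :
    delIdxN cs l i =
      (l.take i).map (fun s => conjR s ((l.get ⟨i, h⟩ : Refl cs) : W)) ++ l.drop (i + 1) := by
  rw [delIdxN, drop_eq_cons l h]

lemma length_delIdxN (l : List (Refl cs)) {i : ℕ} (h : i < l.length) :
    (delIdxN cs l i).length = l.length - 1 := by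
  rw [delIdxN_eq cs l h]
  simp
  omega

lemma take_decomp {α : Type*} (l : List α) {i : ℕ} (h : i < l.length) :
    l = l.take i ++ l.get ⟨i, h⟩ :: l.drop (i + 1) := by
  conv_lhs => rw [← List.take_append_drop i l, drop_eq_cons l h]

lemma pr_take_get_drop (l : List (Refl cs)) {i : ℕ} (h : i < l.length) :
    pr cs l = pr cs (l.take i) *
      (((l.get ⟨i, h⟩ : Refl cs) : W) * pr cs (l.drop (i + 1))) := by
  conv_lhs => rw [show l = l.take i ++ l.drop i from (List.take_append_drop i l).symm]
  rw [pr_append, drop_eq_cons l h, pr_cons]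

lemma pr_delIdxN (l : List (Refl cs)) {i : ℕ} (h : i < l.length) :
    pr cs (delIdxN cs l i) = ((l.get ⟨i, h⟩ : Refl cs) : W)⁻¹ * pr cs l := by
  rw [delIdxN_eq cs l h, pr_append]
  have hcm : (l.take i).map (fun s => conjR s ((l.get ⟨i, h⟩ : Refl cs) : W))
      = cmap cs ((l.get ⟨i, h⟩ : Refl cs) : W) (l.take i) := rfl
  rw [hcm, pr_cmap]
  conv_rhs => rw [pr_take_get_drop cs l h]
  group

lemma pr_eraseIdx (l : List (Refl cs)) {i : ℕ} (h : i < l.length) :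
    pr cs (l.eraseIdx i) =
      pr cs l * ((pr cs (l.drop (i+1)))⁻¹ * ((l.get ⟨i, h⟩ : Refl cs) : W)⁻¹ * pr cs (l.drop (i+1))) := by
  rw [List.eraseIdx_eq_take_drop_succ, pr_append]
  conv_rhs => rw [pr_take_get_drop cs l h]
  group

lemma absLen_refl' (t : Refl cs) : absLen cs (t : W) = 1 := absLen_refl cs t.2

lemma absLen_conj' (u x : W) : absLen cs (u⁻¹ * x * u) = absLen cs x := absLen_conj cs u x

/-- erasing a letter from an NC word yields an NC word -/
lemma NC_eraseIdx {l : List (Refl cs)} (hNC : IsNCWord cs γ l) {i : ℕ} (h : i < l.length) :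
    IsNCWord cs γ (l.eraseIdx i) := by
  obtain ⟨hred, hle⟩ := hNC
  set w := pr cs l with hw
  set t := ((l.get ⟨i, h⟩ : Refl cs) : W) with ht
  set C := pr cs (l.drop (i+1)) with hC
  set s := C⁻¹ * t⁻¹ * C with hs
  have hst : s = C⁻¹ * t * C := by rw [hs, (l.get ⟨i, h⟩).2.inv]
  have hpe : pr cs (l.eraseIdx i) = w * s := by
    rw [pr_eraseIdx cs l h, hs]
  have hls : absLen cs s = 1 := by rw [hst, absLen_conj', ht, absLen_refl']
  have h1 : absLen cs (w * s) ≤ l.length - 1 := by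
    have := pr_le_length cs (l.eraseIdx i)
    rw [hpe] at this
    rwa [List.length_eraseIdx_of_lt h] at this
  have h2 : absLen cs w ≤ absLen cs (w * s) + 1 := by
    have : w = (w * s) * s⁻¹ := by group
    calc absLen cs w = absLen cs ((w * s) * s⁻¹) := by rw [← this]
    _ ≤ absLen cs (w * s) + absLen cs s⁻¹ := absLen_mul_le cs _ _
    _ = absLen cs (w * s) + 1 := by rw [absLen_inv, hls]
  have h3 : absLen cs γ ≤ absLen cs (w * s) + absLen cs ((w * s)⁻¹ * γ) := by
    have : γ = (w * s) * ((w * s)⁻¹ * γ) := by group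
    calc absLen cs γ = absLen cs ((w * s) * ((w * s)⁻¹ * γ)) := by rw [← this]
    _ ≤ _ := absLen_mul_le cs _ _
  have h4 : absLen cs ((w * s)⁻¹ * γ) ≤ 1 + absLen cs (w⁻¹ * γ) := by
    have he : (w * s)⁻¹ * γ = s⁻¹ * (w⁻¹ * γ) := by group
    calc absLen cs ((w * s)⁻¹ * γ) = absLen cs (s⁻¹ * (w⁻¹ * γ)) := by rw [he]
    _ ≤ absLen cs s⁻¹ + absLen cs (w⁻¹ * γ) := absLen_mul_le cs _ _
    _ = 1 + absLen cs (w⁻¹ * γ) := by rw [absLen_inv, hls]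
  have hlen : absLen cs (w * s) = l.length - 1 := by
    have hk : absLen cs w = l.length := hred
    omega
  have hik : 1 ≤ l.length := by omega
  constructor
  · show absLen cs (pr cs (l.eraseIdx i)) = (l.eraseIdx i).length
    rw [hpe, List.length_eraseIdx_of_lt h, hlen]
  · show absLen cs γ = absLen cs (pr cs (l.eraseIdx i)) + absLen cs ((pr cs (l.eraseIdx i))⁻¹ * γ)
    rw [hpe]
    have hge : absLen cs γ = absLen cs w + absLen cs (w⁻¹ * γ) := hle
    have hk : absLen cs w = l.length := hred
    omega

/-- applying `δᵢ` to an NC word yields an NC word -/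
lemma NC_delIdxN {l : List (Refl cs)} (hNC : IsNCWord cs γ l) {i : ℕ} (h : i < l.length) :
    IsNCWord cs γ (delIdxN cs l i) := by
  obtain ⟨hred, hle⟩ := hNC
  set w := pr cs l with hw
  set t := ((l.get ⟨i, h⟩ : Refl cs) : W) with ht
  have hti : t⁻¹ = t := (l.get ⟨i, h⟩).2.inv
  have hlt : absLen cs t = 1 := absLen_refl' cs _
  have hpe : pr cs (delIdxN cs l i) = t⁻¹ * w := pr_delIdxN cs l h
  have h1 : absLen cs (t⁻¹ * w) ≤ l.length - 1 := by
    have h1' := pr_le_length cs (delIdxN cs l i)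
    rw [hpe, length_delIdxN cs l h] at h1'
    exact h1'
  have h2 : absLen cs w ≤ 1 + absLen cs (t⁻¹ * w) := by
    have : w = t * (t⁻¹ * w) := by group
    calc absLen cs w = absLen cs (t * (t⁻¹ * w)) := by rw [← this]
    _ ≤ absLen cs t + absLen cs (t⁻¹ * w) := absLen_mul_le cs _ _
    _ = 1 + absLen cs (t⁻¹ * w) := by rw [hlt]
  have h3 : absLen cs γ ≤ absLen cs (t⁻¹ * w) + absLen cs ((t⁻¹ * w)⁻¹ * γ) := by
    have : γ = (t⁻¹ * w) * ((t⁻¹ * w)⁻¹ * γ) := by group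
    calc absLen cs γ = absLen cs ((t⁻¹ * w) * ((t⁻¹ * w)⁻¹ * γ)) := by rw [← this]
    _ ≤ _ := absLen_mul_le cs _ _
  have h4 : absLen cs ((t⁻¹ * w)⁻¹ * γ) ≤ 1 + absLen cs (w⁻¹ * γ) := by
    have he : (t⁻¹ * w)⁻¹ * γ = (w⁻¹ * t * w) * (w⁻¹ * γ) := by group
    calc absLen cs ((t⁻¹ * w)⁻¹ * γ) = absLen cs ((w⁻¹ * t * w) * (w⁻¹ * γ)) := by rw [he]
    _ ≤ absLen cs (w⁻¹ * t * w) + absLen cs (w⁻¹ * γ) := absLen_mul_le cs _ _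
    _ = 1 + absLen cs (w⁻¹ * γ) := by rw [absLen_conj', hlt]
  have hlen : absLen cs (t⁻¹ * w) = l.length - 1 := by
    have hk : absLen cs w = l.length := hred
    omega
  constructor
  · show absLen cs (pr cs (delIdxN cs l i)) = (delIdxN cs l i).length
    rw [hpe, length_delIdxN cs l h, hlen]
  · show absLen cs γ = absLen cs (pr cs (delIdxN cs l i)) + absLen cs ((pr cs (delIdxN cs l i))⁻¹ * γ)
    rw [hpe]
    have hge : absLen cs γ = absLen cs w + absLen cs (w⁻¹ * γ) := hle
    have hk : absLen cs w = l.length := hred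
    omega

/-- a square `t t` cannot occur inside an NC word -/
lemma notNC_sq (u v : List (Refl cs)) (t : Refl cs) :
    ¬ IsNCWord cs γ (u ++ t :: t :: v) := by
  rintro ⟨hred, -⟩
  have hp : pr cs (u ++ t :: t :: v) = pr cs u * pr cs v := by
    simp
    rw [← mul_assoc ((t:W)) (t:W), t.2.mul_self]
    group
  have h1 : absLen cs (pr cs u * pr cs v) ≤ u.length + v.length :=
    le_trans (absLen_mul_le cs _ _) (Nat.add_le_add (pr_le_length cs u) (pr_le_length cs v))
  have h2 : absLen cs (pr cs (u ++ t :: t :: v)) = u.length + v.length + 2 := by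
    rw [show absLen cs (pr cs (u ++ t :: t :: v)) = (u ++ t :: t :: v).length from hred]
    simp
    omega
  rw [hp] at h2
  omega

/-- an adjacent pair in an NC word is `≤ γ` -/
lemma NC_pair {u v : List (Refl cs)} {t₁ t₂ : Refl cs}
    (hNC : IsNCWord cs γ (u ++ t₁ :: t₂ :: v)) :
    absLe cs ((t₁ : W) * (t₂ : W)) γ := by
  obtain ⟨hred, hle⟩ := hNC
  set A := pr cs u with hA
  set V := pr cs v with hV
  set x := (t₁ : W) * (t₂ : W) with hx
  set w := pr cs (u ++ t₁ :: t₂ :: v) with hw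
  have hweq : w = A * (x * V) := by
    rw [hw]; simp [← hA, ← hV, hx]; group
  have hlA : absLen cs A ≤ u.length := pr_le_length cs u
  have hlV : absLen cs V ≤ v.length := pr_le_length cs v
  have hlw : absLen cs w = u.length + v.length + 2 := by
    rw [show absLen cs w = (u ++ t₁ :: t₂ :: v).length from hred]
    simp; omega
  have hlx2 : absLen cs x ≤ 2 := by
    calc absLen cs x ≤ absLen cs (t₁ : W) + absLen cs (t₂ : W) := absLen_mul_le cs _ _
    _ = 2 := by rw [absLen_refl' cs t₁, absLen_refl' cs t₂]
  have g1 : absLen cs w ≤ absLen cs A + (absLen cs x + absLen cs V) := by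
    calc absLen cs w = absLen cs (A * (x * V)) := by rw [hweq]
    _ ≤ absLen cs A + absLen cs (x * V) := absLen_mul_le cs _ _
    _ ≤ absLen cs A + (absLen cs x + absLen cs V) := Nat.add_le_add_left (absLen_mul_le cs _ _) _
  have g2 : absLen cs γ ≤ absLen cs x + absLen cs (x⁻¹ * γ) := by
    have : γ = x * (x⁻¹ * γ) := by group
    calc absLen cs γ = absLen cs (x * (x⁻¹ * γ)) := by rw [← this]
    _ ≤ _ := absLen_mul_le cs _ _
  have g3 : absLen cs (x⁻¹ * γ) ≤ absLen cs A + (absLen cs V + absLen cs (w⁻¹ * γ)) := by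
    have he : x⁻¹ * γ = (x⁻¹ * A * x) * (V * (w⁻¹ * γ)) := by
      rw [hweq]; group
    calc absLen cs (x⁻¹ * γ) = absLen cs ((x⁻¹ * A * x) * (V * (w⁻¹ * γ))) := by rw [he]
    _ ≤ absLen cs (x⁻¹ * A * x) + absLen cs (V * (w⁻¹ * γ)) := absLen_mul_le cs _ _
    _ ≤ absLen cs (x⁻¹ * A * x) + (absLen cs V + absLen cs (w⁻¹ * γ)) :=
        Nat.add_le_add_left (absLen_mul_le cs _ _) _
    _ = absLen cs A + (absLen cs V + absLen cs (w⁻¹ * γ)) := by rw [absLen_conj']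
  have hge : absLen cs γ = absLen cs w + absLen cs (w⁻¹ * γ) := hle
  show absLen cs γ = absLen cs x + absLen cs (x⁻¹ * γ)
  omega

/-- NC-ness of a word with an adjacent pair depends only on the product of the pair. -/
lemma NC_pair_iff (u v : List (Refl cs)) {p₁ p₂ : Refl cs} {w : W}
    (hp : (p₁ : W) * (p₂ : W) = w) :
    IsNCWord cs γ (u ++ p₁ :: p₂ :: v) ↔
      (absLen cs (pr cs u * (w * pr cs v)) = u.length + v.length + 2 ∧
        absLe cs (pr cs u * (w * pr cs v)) γ) := by
  have hpr : pr cs (u ++ p₁ :: p₂ :: v) = pr cs u * (w * pr cs v) := by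
    simp [← hp]; group
  have hlen : (u ++ p₁ :: p₂ :: v).length = u.length + v.length + 2 := by simp; omega
  rw [IsNCWord]
  show (absLen cs (pr cs (u ++ p₁ :: p₂ :: v)) = _ ∧ absLe cs (pr cs (u ++ p₁ :: p₂ :: v)) γ) ↔ _
  rw [hpr, hlen]

end NCAux
namespace NCAux

variable {B : Type*} {W : Type*} [Group W] {M : CoxeterMatrix B} (cs : CoxeterSystem M W)

/-! ### list lemmas -/

lemma eraseIdx_append_lt {α : Type*} (l : List α) (t : α) {i : ℕ} (h : i < l.length) :
    (l ++ [t]).eraseIdx i = l.eraseIdx i ++ [t] :=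
  List.eraseIdx_append_of_lt_length h [t]

lemma eraseIdx_append_last {α : Type*} (l : List α) (t : α) :
    (l ++ [t]).eraseIdx l.length = l := by
  rw [List.eraseIdx_append_of_length_le (le_refl _)]
  simp

lemma get_append_left {α : Type*} (l : List α) (t : α) {i : ℕ} (h : i < l.length)
    (h' : i < (l ++ [t]).length) :
    (l ++ [t]).get ⟨i, h'⟩ = l.get ⟨i, h⟩ := by
  simp [List.getElem_append_left h]

lemma delIdxN_append_lt (l : List (Refl cs)) (t : Refl cs) {i : ℕ} (h : i < l.length) :
    delIdxN cs (l ++ [t]) i = delIdxN cs l i ++ [t] := by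
  have h' : i < (l ++ [t]).length := by simp; omega
  rw [delIdxN_eq cs _ h', delIdxN_eq cs _ h]
  rw [List.take_append_of_le_length (by omega)]
  rw [List.drop_append_of_le_length (by omega)]
  rw [get_append_left l t h h']
  rw [List.append_assoc]

lemma delIdxN_append_last (l : List (Refl cs)) (t : Refl cs) :
    delIdxN cs (l ++ [t]) l.length = cmap cs (t : W) l := by
  have h' : l.length < (l ++ [t]).length := by simp
  rw [delIdxN_eq cs _ h']
  have hg : (l ++ [t]).get ⟨l.length, h'⟩ = t := by simp
  rw [hg]
  rw [List.take_append_of_le_length (le_refl _)]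
  simp [cmap]

lemma cmap_eraseIdx (u : W) (l : List (Refl cs)) (i : ℕ) :
    cmap cs u (l.eraseIdx i) = (cmap cs u l).eraseIdx i := by
  simp [cmap, List.eraseIdx_eq_take_drop_succ, List.map_take, List.map_drop]

lemma cmap_delIdxN (u : W) (l : List (Refl cs)) {i : ℕ} (h : i < l.length) :
    cmap cs u (delIdxN cs l i) = delIdxN cs (cmap cs u l) i := by
  have h' : i < (cmap cs u l).length := by rwa [length_cmap]
  rw [delIdxN_eq cs _ h', delIdxN_eq cs _ h]
  have hg : ((cmap cs u l).get ⟨i, h'⟩) = conjR (l.get ⟨i, h⟩) u := by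
    simp [cmap]
  rw [hg]
  simp only [cmap, List.map_append, List.map_take, List.map_drop, List.map_map]
  have hfun : ((fun s => conjR s u) ∘ fun s => conjR s ((l.get ⟨i, h⟩ : Refl cs) : W))
      = ((fun s : Refl cs => conjR s ((conjR (l.get ⟨i, h⟩) u : Refl cs) : W))
          ∘ fun s => conjR s u) := by
    funext s
    exact (conjR_conjR cs s (l.get ⟨i, h⟩) u).symm
  rw [hfun]

/-! ### the operators on words -/

@[simp] lemma mono_nil : mono cs [] = 1 := rfl

lemma mono_cons (t : Refl cs) (l : List (Refl cs)) :
    mono cs (t :: l) = FreeAlgebra.ι ℤ t * mono cs l := by simp [mono]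

lemma mono_append (u v : List (Refl cs)) :
    mono cs (u ++ v) = mono cs u * mono cs v := by simp [mono]

lemma mono_singleton (t : Refl cs) : mono cs [t] = FreeAlgebra.ι ℤ t := by simp [mono]

/-- `d` with sign `(-1)^i` -/
noncomputable def dW (l : List (Refl cs)) : FreeAlgebra ℤ (Refl cs) :=
  ∑ i ∈ Finset.range l.length, ((-1 : ℤ) ^ i) • mono cs (l.eraseIdx i)

/-- `δ` -/
noncomputable def delW (l : List (Refl cs)) : FreeAlgebra ℤ (Refl cs) :=
  ∑ i ∈ Finset.range l.length, ((-1 : ℤ) ^ i) • mono cs (delIdxN cs l i)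

/-- `d` with the signs of the problem statement -/
noncomputable def dFull (l : List (Refl cs)) : FreeAlgebra ℤ (Refl cs) :=
  ∑ i ∈ Finset.range l.length, ((-1 : ℤ) ^ (l.length - 1 - i)) • mono cs (l.eraseIdx i)

lemma dFull_eq (l : List (Refl cs)) : dFull cs l = ((-1 : ℤ) ^ (l.length - 1)) • dW cs l := by
  rw [dFull, dW, Finset.smul_sum]
  refine Finset.sum_congr rfl ?_
  intro i hi
  have hi' : i < l.length := Finset.mem_range.mp hi
  rw [smul_smul, ← pow_add]
  congr 1
  have h2 : l.length - 1 + i = (l.length - 1 - i) + 2 * i := by omega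
  rw [h2, pow_add, pow_mul, neg_one_sq, one_pow, mul_one]

@[simp] lemma dW_nil : dW cs [] = 0 := by simp [dW]
@[simp] lemma delW_nil : delW cs [] = 0 := by simp [delW]
@[simp] lemma dFull_nil : dFull cs [] = 0 := by simp [dFull]

/-- the `Tg` gadget: `δ`-type sums with a fixed prefix that gets conjugated -/
noncomputable def TgIdx (x l : List (Refl cs)) (j : ℕ) : List (Refl cs) :=
  match l.drop j with
  | [] => []
  | g :: _ => cmap cs (g : W) x ++ delIdxN cs l j

lemma TgIdx_eq (x l : List (Refl cs)) {j : ℕ} (h : j < l.length) :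
    TgIdx cs x l j = cmap cs ((l.get ⟨j, h⟩ : Refl cs) : W) x ++ delIdxN cs l j := by
  rw [TgIdx, drop_eq_cons l h]

noncomputable def Tg (x l : List (Refl cs)) : FreeAlgebra ℤ (Refl cs) :=
  ∑ j ∈ Finset.range l.length, ((-1 : ℤ) ^ j) • mono cs (TgIdx cs x l j)

@[simp] lemma Tg_nil (x : List (Refl cs)) : Tg cs x [] = 0 := by simp [Tg]

lemma Tg_nil_left (l : List (Refl cs)) : Tg cs [] l = delW cs l := by
  rw [Tg, delW]
  refine Finset.sum_congr rfl ?_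
  intro j hj
  have hj' : j < l.length := Finset.mem_range.mp hj
  rw [TgIdx_eq cs [] l hj']
  simp [cmap]

/-! ### right-append recursions -/

lemma dW_append_single (l : List (Refl cs)) (t : Refl cs) :
    dW cs (l ++ [t]) = dW cs l * FreeAlgebra.ι ℤ t + ((-1 : ℤ) ^ l.length) • mono cs l := by
  rw [dW]
  have hlen : (l ++ [t]).length = l.length + 1 := by simp
  rw [hlen, Finset.sum_range_succ, eraseIdx_append_last l t]
  congr 1
  rw [dW, Finset.sum_mul]
  refine Finset.sum_congr rfl ?_
  intro i hi
  have hi' : i < l.length := Finset.mem_range.mp hi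
  rw [eraseIdx_append_lt l t hi', mono_append, mono_singleton, smul_mul_assoc]

lemma delW_append_single (l : List (Refl cs)) (t : Refl cs) :
    delW cs (l ++ [t]) = delW cs l * FreeAlgebra.ι ℤ t
      + ((-1 : ℤ) ^ l.length) • mono cs (cmap cs (t : W) l) := by
  rw [delW]
  have hlen : (l ++ [t]).length = l.length + 1 := by simp
  rw [hlen, Finset.sum_range_succ, delIdxN_append_last cs l t]
  congr 1
  rw [delW, Finset.sum_mul]
  refine Finset.sum_congr rfl ?_
  intro i hi
  have hi' : i < l.length := Finset.mem_range.mp hi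
  rw [delIdxN_append_lt cs l t hi', mono_append, mono_singleton, smul_mul_assoc]

lemma TgIdx_append_lt (x l : List (Refl cs)) (t : Refl cs) {j : ℕ} (h : j < l.length) :
    TgIdx cs x (l ++ [t]) j = TgIdx cs x l j ++ [t] := by
  have h' : j < (l ++ [t]).length := by simp; omega
  rw [TgIdx_eq cs x _ h', TgIdx_eq cs x l h, get_append_left l t h h',
    delIdxN_append_lt cs l t h, List.append_assoc]

lemma TgIdx_append_last (x l : List (Refl cs)) (t : Refl cs) :
    TgIdx cs x (l ++ [t]) l.length = cmap cs (t : W) (x ++ l) := by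
  have h' : l.length < (l ++ [t]).length := by simp
  rw [TgIdx_eq cs x _ h']
  have hg : (l ++ [t]).get ⟨l.length, h'⟩ = t := by simp
  rw [hg, delIdxN_append_last cs l t]
  simp [cmap]

lemma Tg_append_single (x l : List (Refl cs)) (t : Refl cs) :
    Tg cs x (l ++ [t]) = Tg cs x l * FreeAlgebra.ι ℤ t
      + ((-1 : ℤ) ^ l.length) • mono cs (cmap cs (t : W) (x ++ l)) := by
  rw [Tg]
  have hlen : (l ++ [t]).length = l.length + 1 := by simp
  rw [hlen, Finset.sum_range_succ, TgIdx_append_last cs x l t]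
  congr 1
  rw [Tg, Finset.sum_mul]
  refine Finset.sum_congr rfl ?_
  intro i hi
  have hi' : i < l.length := Finset.mem_range.mp hi
  rw [TgIdx_append_lt cs x l t hi', mono_append, mono_singleton, smul_mul_assoc]

/-! ### left-cons recursions -/

lemma dW_cons (t : Refl cs) (l : List (Refl cs)) :
    dW cs (t :: l) = mono cs l - FreeAlgebra.ι ℤ t * dW cs l := by
  rw [dW]
  have hlen : (t :: l).length = l.length + 1 := by simp
  rw [hlen, Finset.sum_range_succ']
  have h0 : (t :: l).eraseIdx 0 = l := rfl
  rw [h0]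
  simp only [pow_zero, one_smul]
  rw [sub_eq_add_neg, add_comm]
  congr 1
  rw [dW, Finset.mul_sum, ← Finset.sum_neg_distrib]
  refine Finset.sum_congr rfl ?_
  intro i hi
  have he : (t :: l).eraseIdx (i + 1) = t :: l.eraseIdx i := rfl
  rw [he, mono_cons, pow_succ, mul_smul_comm]
  rw [mul_comm ((-1:ℤ)^i) (-1)]
  rw [← smul_smul]
  simp

lemma delIdxN_cons_succ (t : Refl cs) (l : List (Refl cs)) {j : ℕ} (h : j < l.length) :
    delIdxN cs (t :: l) (j + 1) = conjR t ((l.get ⟨j, h⟩ : Refl cs) : W) :: delIdxN cs l j := by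
  have h' : j + 1 < (t :: l).length := by simp; omega
  rw [delIdxN_eq cs _ h', delIdxN_eq cs l h]
  have hg : (t :: l).get ⟨j + 1, h'⟩ = l.get ⟨j, h⟩ := rfl
  rw [hg]
  rfl

lemma TgIdx_cons_succ (x : List (Refl cs)) (t : Refl cs) (l : List (Refl cs)) {j : ℕ}
    (h : j < l.length) :
    TgIdx cs x (t :: l) (j + 1) = TgIdx cs (x ++ [t]) l j := by
  have h' : j + 1 < (t :: l).length := by simp; omega
  rw [TgIdx_eq cs x _ h', TgIdx_eq cs (x ++ [t]) l h]
  have hg : (t :: l).get ⟨j + 1, h'⟩ = l.get ⟨j, h⟩ := rfl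
  rw [hg, delIdxN_cons_succ cs t l h]
  simp [cmap]

lemma Tg_cons (x : List (Refl cs)) (t : Refl cs) (l : List (Refl cs)) :
    Tg cs x (t :: l) = mono cs (cmap cs (t : W) x ++ l) - Tg cs (x ++ [t]) l := by
  rw [Tg]
  have hlen : (t :: l).length = l.length + 1 := by simp
  rw [hlen, Finset.sum_range_succ']
  have h0 : TgIdx cs x (t :: l) 0 = cmap cs (t : W) x ++ l := by
    have h0' : (0 : ℕ) < (t :: l).length := by simp
    rw [TgIdx_eq cs x _ h0']
    rfl
  rw [h0]
  simp only [pow_zero, one_smul]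
  rw [sub_eq_add_neg, add_comm]
  congr 1
  rw [Tg, ← Finset.sum_neg_distrib]
  refine Finset.sum_congr rfl ?_
  intro j hj
  have hj' : j < l.length := Finset.mem_range.mp hj
  rw [TgIdx_cons_succ cs x t l hj', pow_succ]
  rw [mul_comm ((-1:ℤ)^j) (-1), ← smul_smul]
  simp

/-! ### append decompositions -/

lemma dW_append (x y : List (Refl cs)) :
    dW cs (x ++ y) = dW cs x * mono cs y + ((-1 : ℤ) ^ x.length) • (mono cs x * dW cs y) := by
  induction y using List.reverseRecOn with
  | nil => simp
  | append_singleton y t ih =>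
      rw [← List.append_assoc, dW_append_single, ih, dW_append_single, mono_append,
        mono_append, mono_singleton]
      have hlen : (x ++ y).length = x.length + y.length := by simp
      rw [hlen, pow_add]
      simp only [add_mul, mul_add, smul_add, smul_mul_assoc, mul_smul_comm, smul_smul,
        mul_assoc]
      abel

lemma delW_append (x y : List (Refl cs)) :
    delW cs (x ++ y) = delW cs x * mono cs y + ((-1 : ℤ) ^ x.length) • Tg cs x y := by
  induction y using List.reverseRecOn with
  | nil => simp
  | append_singleton y t ih =>
      rw [← List.append_assoc, delW_append_single, ih, Tg_append_single,
        mono_append, mono_singleton]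
      have hlen : (x ++ y).length = x.length + y.length := by simp
      rw [hlen, pow_add]
      simp only [add_mul, mul_add, smul_add, smul_mul_assoc, mul_smul_comm, smul_smul,
        mul_assoc]
      abel

/-! ### the three simplicial identities -/

lemma identity_E1 (l : List (Refl cs)) :
    ∑ i ∈ Finset.range l.length, ((-1 : ℤ) ^ i) • dW cs (l.eraseIdx i) = 0 := by
  induction l using List.reverseRecOn with
  | nil => simp
  | append_singleton l t ih =>
      by_cases hk : l.length = 0
      · rw [List.length_eq_zero_iff] at hk
        subst hk
        simp [dW]
      have hlen : (l ++ [t]).length = l.length + 1 := by simp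
      rw [hlen, Finset.sum_range_succ, eraseIdx_append_last l t]
      have hstep : ∀ i ∈ Finset.range l.length,
          ((-1 : ℤ) ^ i) • dW cs ((l ++ [t]).eraseIdx i)
          = ((-1 : ℤ) ^ i) • dW cs (l.eraseIdx i) * FreeAlgebra.ι ℤ t
            + ((-1 : ℤ) ^ i * (-1 : ℤ) ^ (l.length - 1)) • mono cs (l.eraseIdx i) := by
        intro i hi
        have hi' : i < l.length := Finset.mem_range.mp hi
        rw [eraseIdx_append_lt l t hi', dW_append_single,
          List.length_eraseIdx_of_lt hi', smul_add, smul_mul_assoc, smul_smul]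
      rw [Finset.sum_congr rfl hstep, Finset.sum_add_distrib, ← Finset.sum_mul]
      rw [ih, zero_mul, zero_add]
      have : ∀ i ∈ Finset.range l.length,
          ((-1 : ℤ) ^ i * (-1 : ℤ) ^ (l.length - 1)) • mono cs (l.eraseIdx i)
          = ((-1 : ℤ) ^ (l.length - 1)) • (((-1 : ℤ) ^ i) • mono cs (l.eraseIdx i)) := by
        intro i hi
        rw [smul_smul, mul_comm]
      rw [Finset.sum_congr rfl this, ← Finset.smul_sum, ← dW]
      have hsign : ((-1 : ℤ) ^ (l.length - 1)) = -((-1 : ℤ) ^ l.length) := by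
        obtain ⟨m, hm⟩ := Nat.exists_eq_succ_of_ne_zero hk
        rw [hm]
        simp [pow_succ]
      rw [hsign]
      simp

lemma identity_E2 (l : List (Refl cs)) :
    ∑ i ∈ Finset.range l.length, ((-1 : ℤ) ^ i) • delW cs (delIdxN cs l i) = 0 := by
  induction l using List.reverseRecOn with
  | nil => simp
  | append_singleton l t ih =>
      by_cases hk : l.length = 0
      · rw [List.length_eq_zero_iff] at hk
        subst hk
        simp [delIdxN, delW]
      have hlen : (l ++ [t]).length = l.length + 1 := by simp
      rw [hlen, Finset.sum_range_succ, delIdxN_append_last cs l t]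
      have hstep : ∀ i ∈ Finset.range l.length,
          ((-1 : ℤ) ^ i) • delW cs (delIdxN cs (l ++ [t]) i)
          = ((-1 : ℤ) ^ i) • delW cs (delIdxN cs l i) * FreeAlgebra.ι ℤ t
            + ((-1 : ℤ) ^ i * (-1 : ℤ) ^ (l.length - 1)) •
              mono cs (cmap cs (t : W) (delIdxN cs l i)) := by
        intro i hi
        have hi' : i < l.length := Finset.mem_range.mp hi
        rw [delIdxN_append_lt cs l t hi', delW_append_single,
          length_delIdxN cs l hi', smul_add, smul_mul_assoc, smul_smul]
      rw [Finset.sum_congr rfl hstep, Finset.sum_add_distrib, ← Finset.sum_mul]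
      rw [ih, zero_mul, zero_add]
      have hmid : ∀ i ∈ Finset.range l.length,
          ((-1 : ℤ) ^ i * (-1 : ℤ) ^ (l.length - 1)) • mono cs (cmap cs (t : W) (delIdxN cs l i))
          = ((-1 : ℤ) ^ (l.length - 1)) •
              (((-1 : ℤ) ^ i) • mono cs (delIdxN cs (cmap cs (t : W) l) i)) := by
        intro i hi
        have hi' : i < l.length := Finset.mem_range.mp hi
        rw [cmap_delIdxN cs _ l hi', smul_smul, mul_comm]
      rw [Finset.sum_congr rfl hmid, ← Finset.smul_sum]
      have hdel : ∑ i ∈ Finset.range l.length,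
          ((-1 : ℤ) ^ i) • mono cs (delIdxN cs (cmap cs (t : W) l) i)
          = delW cs (cmap cs (t : W) l) := by
        rw [delW, length_cmap]
      rw [hdel]
      have hsign : ((-1 : ℤ) ^ (l.length - 1)) = -((-1 : ℤ) ^ l.length) := by
        obtain ⟨m, hm⟩ := Nat.exists_eq_succ_of_ne_zero hk
        rw [hm]
        simp [pow_succ]
      rw [hsign]
      simp

lemma identity_E3 (l : List (Refl cs)) :
    ∑ i ∈ Finset.range l.length, ((-1 : ℤ) ^ i) • dW cs (delIdxN cs l i)
    + ∑ i ∈ Finset.range l.length, ((-1 : ℤ) ^ i) • delW cs (l.eraseIdx i) = 0 := by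
  induction l using List.reverseRecOn with
  | nil => simp
  | append_singleton l t ih =>
      by_cases hk : l.length = 0
      · rw [List.length_eq_zero_iff] at hk
        subst hk
        simp [delIdxN, delW, dW]
      have hlen : (l ++ [t]).length = l.length + 1 := by simp
      rw [hlen, Finset.sum_range_succ, Finset.sum_range_succ,
        delIdxN_append_last cs l t, eraseIdx_append_last l t]
      have hstep1 : ∀ i ∈ Finset.range l.length,
          ((-1 : ℤ) ^ i) • dW cs (delIdxN cs (l ++ [t]) i)
          = ((-1 : ℤ) ^ i) • dW cs (delIdxN cs l i) * FreeAlgebra.ι ℤ t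
            + ((-1 : ℤ) ^ i * (-1 : ℤ) ^ (l.length - 1)) • mono cs (delIdxN cs l i) := by
        intro i hi
        have hi' : i < l.length := Finset.mem_range.mp hi
        rw [delIdxN_append_lt cs l t hi', dW_append_single,
          length_delIdxN cs l hi', smul_add, smul_mul_assoc, smul_smul]
      have hstep2 : ∀ i ∈ Finset.range l.length,
          ((-1 : ℤ) ^ i) • delW cs ((l ++ [t]).eraseIdx i)
          = ((-1 : ℤ) ^ i) • delW cs (l.eraseIdx i) * FreeAlgebra.ι ℤ t
            + ((-1 : ℤ) ^ i * (-1 : ℤ) ^ (l.length - 1)) •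
                mono cs (cmap cs (t : W) (l.eraseIdx i)) := by
        intro i hi
        have hi' : i < l.length := Finset.mem_range.mp hi
        rw [eraseIdx_append_lt l t hi', delW_append_single,
          List.length_eraseIdx_of_lt hi', smul_add, smul_mul_assoc, smul_smul]
      rw [Finset.sum_congr rfl hstep1, Finset.sum_congr rfl hstep2,
        Finset.sum_add_distrib, Finset.sum_add_distrib, ← Finset.sum_mul, ← Finset.sum_mul]
      have hmid1 : ∀ i ∈ Finset.range l.length,
          ((-1 : ℤ) ^ i * (-1 : ℤ) ^ (l.length - 1)) • mono cs (delIdxN cs l i)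
          = ((-1 : ℤ) ^ (l.length - 1)) • (((-1 : ℤ) ^ i) • mono cs (delIdxN cs l i)) := by
        intro i hi
        rw [smul_smul, mul_comm]
      have hmid2 : ∀ i ∈ Finset.range l.length,
          ((-1 : ℤ) ^ i * (-1 : ℤ) ^ (l.length - 1)) • mono cs (cmap cs (t : W) (l.eraseIdx i))
          = ((-1 : ℤ) ^ (l.length - 1)) •
              (((-1 : ℤ) ^ i) • mono cs ((cmap cs (t : W) l).eraseIdx i)) := by
        intro i hi
        rw [cmap_eraseIdx, smul_smul, mul_comm]
      rw [Finset.sum_congr rfl hmid1, Finset.sum_congr rfl hmid2,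
        ← Finset.smul_sum, ← Finset.smul_sum, ← delW]
      have hdw : ∑ i ∈ Finset.range l.length,
          ((-1 : ℤ) ^ i) • mono cs ((cmap cs (t : W) l).eraseIdx i)
          = dW cs (cmap cs (t : W) l) := by
        rw [dW, length_cmap]
      rw [hdw]
      have hsign : ((-1 : ℤ) ^ (l.length - 1)) = -((-1 : ℤ) ^ l.length) := by
        obtain ⟨m, hm⟩ := Nat.exists_eq_succ_of_ne_zero hk
        rw [hm]
        simp [pow_succ]
      rw [hsign]
      -- now everything cancels
      have hfin : (∑ i ∈ Finset.range l.length, ((-1 : ℤ) ^ i) • dW cs (delIdxN cs l i)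
          + ∑ i ∈ Finset.range l.length, ((-1 : ℤ) ^ i) • delW cs (l.eraseIdx i)) = 0 := ih
      calc (∑ i ∈ Finset.range l.length, ((-1 : ℤ) ^ i) • dW cs (delIdxN cs l i)) *
            FreeAlgebra.ι ℤ t + (-(-1 : ℤ) ^ l.length) • delW cs l
          + ((-1 : ℤ) ^ l.length • dW cs (cmap cs (t : W) l))
          + ((∑ i ∈ Finset.range l.length, ((-1 : ℤ) ^ i) • delW cs (l.eraseIdx i)) *
              FreeAlgebra.ι ℤ t + (-(-1 : ℤ) ^ l.length) • dW cs (cmap cs (t : W) l)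
            + ((-1 : ℤ) ^ l.length • delW cs l))
          = (∑ i ∈ Finset.range l.length, ((-1 : ℤ) ^ i) • dW cs (delIdxN cs l i)
              + ∑ i ∈ Finset.range l.length, ((-1 : ℤ) ^ i) • delW cs (l.eraseIdx i)) *
              FreeAlgebra.ι ℤ t := by
            rw [add_mul]
            simp [neg_smul]
            abel
        _ = 0 := by rw [hfin, zero_mul]

end NCAux
/-- The defining relations of the noncrossing algebra `𝒜 = 𝒜(W, γ)`. -/
inductive NCRel {B : Type*} {W : Type*} [Group W] [Fintype W] {M : CoxeterMatrix B}
    (cs : CoxeterSystem M W) (γ : W) :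
    FreeAlgebra ℤ (Refl cs) → FreeAlgebra ℤ (Refl cs) → Prop
  | sq (t : Refl cs) :
      NCRel cs γ (FreeAlgebra.ι ℤ t * FreeAlgebra.ι ℤ t) 0
  | ncross (t₁ t₂ : Refl cs) (h : ¬ absLe cs ((t₁ : W) * (t₂ : W)) γ) :
      NCRel cs γ (FreeAlgebra.ι ℤ t₁ * FreeAlgebra.ι ℤ t₂) 0
  | sum (w : W) (h : absLen cs w = 2) (hw : absLe cs w γ) :
      NCRel cs γ
        (∑ p : Refl cs × Refl cs,
          if (p.1 : W) * (p.2 : W) = w then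
            FreeAlgebra.ι ℤ p.1 * FreeAlgebra.ι ℤ p.2 else 0) 0

namespace NCAux

variable {B : Type*} {W : Type*} [Group W] {M : CoxeterMatrix B} (cs : CoxeterSystem M W)

/-! ### the basis of words -/

lemma basis_eq_mono (l : List (Refl cs)) :
    FreeAlgebra.basisFreeMonoid ℤ (Refl cs) (FreeMonoid.ofList l) = mono cs l := by
  have hb : ∀ m : FreeMonoid (Refl cs),
      FreeAlgebra.basisFreeMonoid ℤ (Refl cs) m
        = (FreeAlgebra.equivMonoidAlgebraFreeMonoid (R := ℤ) (X := Refl cs)).symm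
            (MonoidAlgebra.of ℤ (FreeMonoid (Refl cs)) m) := by
    intro m
    rw [FreeAlgebra.basisFreeMonoid, Module.Basis.map_apply]
    simp only [Finsupp.coe_basisSingleOne, MonoidAlgebra.of_apply]
    rfl
  rw [hb]
  induction l with
  | nil =>
      have h1 : FreeMonoid.ofList ([] : List (Refl cs)) = 1 := rfl
      rw [h1, map_one, map_one, mono_nil]
  | cons t l ih =>
      rw [FreeMonoid.ofList_cons, map_mul, map_mul, ih, mono_cons]
      congr 1
      rw [FreeAlgebra.equivMonoidAlgebraFreeMonoid, AlgEquiv.ofAlgHom_symm_apply,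
        MonoidAlgebra.lift_of]
      simp

lemma mono_span_top :
    Submodule.span ℤ (Set.range (fun l : List (Refl cs) => mono cs l)) = ⊤ := by
  refine top_unique ?_
  erw [← (FreeAlgebra.basisFreeMonoid ℤ (Refl cs)).span_eq]
  refine Submodule.span_mono ?_
  rintro _ ⟨m, rfl⟩
  exact ⟨m.toList, by
    show mono cs m.toList = _
    rw [← basis_eq_mono, FreeMonoid.ofList_toList]⟩

variable [Fintype W] (γ : W)

/-! ### the truncation maps on the free algebra -/

noncomputable def dF : FreeAlgebra ℤ (Refl cs) →ₗ[ℤ] FreeAlgebra ℤ (Refl cs) :=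
  (FreeAlgebra.basisFreeMonoid ℤ (Refl cs)).constr ℕ
    (fun m => if IsNCWord cs γ m.toList then dFull cs m.toList else 0)

noncomputable def delF : FreeAlgebra ℤ (Refl cs) →ₗ[ℤ] FreeAlgebra ℤ (Refl cs) :=
  (FreeAlgebra.basisFreeMonoid ℤ (Refl cs)).constr ℕ
    (fun m => if IsNCWord cs γ m.toList then delW cs m.toList else 0)

lemma dF_mono (l : List (Refl cs)) :
    dF cs γ (mono cs l) = if IsNCWord cs γ l then dFull cs l else 0 := by
  rw [← basis_eq_mono, dF]
  erw [Module.Basis.constr_basis]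
  rw [FreeMonoid.toList_ofList]

lemma delF_mono (l : List (Refl cs)) :
    delF cs γ (mono cs l) = if IsNCWord cs γ l then delW cs l else 0 := by
  rw [← basis_eq_mono, delF]
  erw [Module.Basis.constr_basis]
  rw [FreeMonoid.toList_ofList]

/-! ### the ideal of the relations, as a `ℤ`-submodule -/

noncomputable def J : Submodule ℤ (FreeAlgebra ℤ (Refl cs)) :=
  Submodule.span ℤ
    {z | ∃ (u v : List (Refl cs)) (a b : FreeAlgebra ℤ (Refl cs)),
        NCRel cs γ a b ∧ z = mono cs u * (a - b) * mono cs v}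

lemma J_mul_right {x : FreeAlgebra ℤ (Refl cs)} (hx : x ∈ J cs γ) (c : FreeAlgebra ℤ (Refl cs)) :
    x * c ∈ J cs γ := by
  induction hx using Submodule.span_induction generalizing c with
  | mem z hz =>
      obtain ⟨u, v, a, b, hab, rfl⟩ := hz
      have hc : c ∈ Submodule.span ℤ (Set.range (fun l : List (Refl cs) => mono cs l)) := by
        rw [mono_span_top]; trivial
      induction hc using Submodule.span_induction with
      | mem c hc =>
          obtain ⟨w, rfl⟩ := hc
          refine Submodule.subset_span ⟨u, v ++ w, a, b, hab, ?_⟩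
          rw [mono_append, ← mul_assoc]
      | zero => simpa using (Submodule.zero_mem (J cs γ))
      | add c d hc hd ihc ihd => rw [mul_add]; exact Submodule.add_mem _ ihc ihd
      | smul r c hc ihc => rw [mul_smul_comm]; exact Submodule.smul_mem _ _ ihc
  | zero => simpa using Submodule.zero_mem (J cs γ)
  | add x y hx hy ihx ihy => rw [add_mul]; exact Submodule.add_mem _ (ihx c) (ihy c)
  | smul r x hx ihx => rw [smul_mul_assoc]; exact Submodule.smul_mem _ _ (ihx c)

lemma J_mul_left {x : FreeAlgebra ℤ (Refl cs)} (hx : x ∈ J cs γ) (c : FreeAlgebra ℤ (Refl cs)) :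
    c * x ∈ J cs γ := by
  induction hx using Submodule.span_induction generalizing c with
  | mem z hz =>
      obtain ⟨u, v, a, b, hab, rfl⟩ := hz
      have hc : c ∈ Submodule.span ℤ (Set.range (fun l : List (Refl cs) => mono cs l)) := by
        rw [mono_span_top]; trivial
      induction hc using Submodule.span_induction with
      | mem c hc =>
          obtain ⟨w, rfl⟩ := hc
          refine Submodule.subset_span ⟨w ++ u, v, a, b, hab, ?_⟩
          rw [mono_append, mul_assoc, mul_assoc, mul_assoc]
      | zero => simpa using (Submodule.zero_mem (J cs γ))
      | add c d hc hd ihc ihd => rw [add_mul]; exact Submodule.add_mem _ ihc ihd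
      | smul r c hc ihc => rw [smul_mul_assoc]; exact Submodule.smul_mem _ _ ihc
  | zero => simpa using Submodule.zero_mem (J cs γ)
  | add x y hx hy ihx ihy => rw [mul_add]; exact Submodule.add_mem _ (ihx c) (ihy c)
  | smul r x hx ihx => rw [mul_smul_comm]; exact Submodule.smul_mem _ _ (ihx c)

lemma sub_mem_J_of_rel {x y : FreeAlgebra ℤ (Refl cs)} (h : RingQuot.Rel (NCRel cs γ) x y) :
    x - y ∈ J cs γ := by
  induction h with
  | of h =>
      refine Submodule.subset_span ⟨[], [], _, _, h, ?_⟩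
      rw [mono_nil, one_mul, mul_one]
  | add_left _ ih => simpa using ih
  | mul_left _ ih =>
      rename_i a b c _
      have := J_mul_right cs γ ih c
      rwa [sub_mul] at this
  | mul_right _ ih =>
      rename_i a b c _
      have := J_mul_left cs γ ih a
      rwa [mul_sub] at this

lemma sub_mem_J_of_eqvGen {x y : FreeAlgebra ℤ (Refl cs)}
    (h : Relation.EqvGen (RingQuot.Rel (NCRel cs γ)) x y) : x - y ∈ J cs γ := by
  induction h with
  | rel _ _ h => exact sub_mem_J_of_rel cs γ h
  | refl _ => simpa using Submodule.zero_mem (J cs γ)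
  | symm a b _ ih => have := Submodule.neg_mem _ ih; simpa using this
  | trans a b c _ _ ih1 ih2 => have := Submodule.add_mem _ ih1 ih2; simpa using this

lemma mem_J_of_pi_eq_zero {x : FreeAlgebra ℤ (Refl cs)}
    (h : RingQuot.mkAlgHom ℤ (NCRel cs γ) x = 0) : x ∈ J cs γ := by
  have h0 : RingQuot.mkAlgHom ℤ (NCRel cs γ) x = RingQuot.mkAlgHom ℤ (NCRel cs γ) 0 := by
    rw [h, map_zero]
  have h1 : RingQuot.mkRingHom (NCRel cs γ) x = RingQuot.mkRingHom (NCRel cs γ) 0 := by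
    rw [← RingQuot.mkAlgHom_coe ℤ]
    exact_mod_cast h0
  rw [RingQuot.mkRingHom_def] at h1
  simp only [RingHom.coe_mk, MonoidHom.coe_mk, OneHom.coe_mk] at h1
  have hq : Quot.mk (RingQuot.Rel (NCRel cs γ)) x = Quot.mk (RingQuot.Rel (NCRel cs γ)) 0 :=
    congrArg RingQuot.toQuot h1
  have := sub_mem_J_of_eqvGen cs γ (Quot.eqvGen_exact hq)
  simpa using this

end NCAux
namespace NCAux

variable {B : Type*} {W : Type*} [Group W] {M : CoxeterMatrix B} (cs : CoxeterSystem M W)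

lemma conjR_conjR_self (s x : Refl cs) : conjR (conjR s (x : W)) ((x : Refl cs) : W) = s := by
  apply Subtype.ext
  show (x : W)⁻¹ * ((x : W)⁻¹ * s * x) * x = s
  rw [x.2.inv]
  simp only [mul_assoc]
  rw [x.2.mul_self, mul_one, ← mul_assoc, x.2.mul_self, one_mul]

/-- the pair bijection `(t₁, t₂) ↦ (t₂, t₂⁻¹ t₁ t₂)` preserving products -/
def pairConj : (Refl cs × Refl cs) ≃ (Refl cs × Refl cs) where
  toFun p := (p.2, conjR p.1 (p.2 : W))
  invFun q := (conjR q.2 (q.1 : W), q.1)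
  left_inv p := by
    refine Prod.ext ?_ rfl
    exact conjR_conjR_self cs p.1 p.2
  right_inv q := by
    refine Prod.ext rfl ?_
    exact conjR_conjR_self cs q.2 q.1

lemma pairConj_symm_apply (q : Refl cs × Refl cs) :
    (pairConj cs).symm q = (conjR q.2 (q.1 : W), q.1) := rfl

lemma pairConj_symm_prod (q : Refl cs × Refl cs) :
    ((((pairConj cs).symm q).1 : Refl cs) : W) * ((((pairConj cs).symm q).2 : Refl cs) : W)
      = (q.1 : W) * (q.2 : W) := by
  rw [pairConj_symm_apply]
  show ((q.1 : W)⁻¹ * q.2 * q.1) * q.1 = (q.1 : W) * q.2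
  rw [mul_assoc, q.1.2.mul_self, mul_one, q.1.2.inv]

/-- conjugation by a fixed group element, as a bijection of the reflections -/
def cRefl (z : W) : Refl cs ≃ Refl cs where
  toFun t := conjR t z
  invFun t := conjR t z⁻¹
  left_inv t := by
    apply Subtype.ext
    show (z⁻¹)⁻¹ * (z⁻¹ * t * z) * z⁻¹ = (t : W)
    group
  right_inv t := by
    apply Subtype.ext
    show z⁻¹ * ((z⁻¹)⁻¹ * t * z⁻¹) * z = (t : W)
    group

variable [Fintype W] (γ : W)

/-- image of the full degree-2 sum relation vanishes -/
lemma pi_rel_sum {w : W} (h2 : absLen cs w = 2) (hw : absLe cs w γ) :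
    RingQuot.mkAlgHom ℤ (NCRel cs γ)
      (∑ p : Refl cs × Refl cs,
        if (p.1 : W) * (p.2 : W) = w then
          FreeAlgebra.ι ℤ p.1 * FreeAlgebra.ι ℤ p.2 else 0) = 0 := by
  rw [RingQuot.mkAlgHom_rel ℤ (NCRel.sum w h2 hw), map_zero]

/-- image of a conjugated degree-2 sum relation vanishes -/
lemma pi_Xi {w : W} (h2 : absLen cs w = 2) (z : W) :
    RingQuot.mkAlgHom ℤ (NCRel cs γ)
      (∑ p : Refl cs × Refl cs,
        if (p.1 : W) * (p.2 : W) = w then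
          FreeAlgebra.ι ℤ (conjR p.1 z) * FreeAlgebra.ι ℤ (conjR p.2 z) else 0) = 0 := by
  have hre : (∑ p : Refl cs × Refl cs,
        if (p.1 : W) * (p.2 : W) = w then
          FreeAlgebra.ι ℤ (conjR p.1 z) * FreeAlgebra.ι ℤ (conjR p.2 z) else 0)
      = ∑ q : Refl cs × Refl cs,
          if (q.1 : W) * (q.2 : W) = z⁻¹ * w * z then
            FreeAlgebra.ι ℤ q.1 * FreeAlgebra.ι ℤ q.2 else 0 := by
    refine Fintype.sum_equiv (Equiv.prodCongr (cRefl cs z) (cRefl cs z)) _ _ ?_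
    intro p
    have hcond : (((conjR p.1 z : Refl cs) : W) * ((conjR p.2 z : Refl cs) : W) = z⁻¹ * w * z)
        ↔ ((p.1 : W) * (p.2 : W) = w) := by
      show (z⁻¹ * p.1 * z) * (z⁻¹ * p.2 * z) = z⁻¹ * w * z ↔ _
      have hq : (z⁻¹ * p.1 * z) * (z⁻¹ * p.2 * z) = z⁻¹ * (((p.1 : W) * p.2) * z) := by group
      rw [hq, show z⁻¹ * w * z = z⁻¹ * (w * z) by rw [mul_assoc], mul_right_inj,
        mul_left_inj]
    show (if (p.1 : W) * (p.2 : W) = w then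
        FreeAlgebra.ι ℤ (conjR p.1 z) * FreeAlgebra.ι ℤ (conjR p.2 z) else 0) = _
    rw [show ((Equiv.prodCongr (cRefl cs z) (cRefl cs z)) p) = (conjR p.1 z, conjR p.2 z) from rfl]
    by_cases hp : (p.1 : W) * (p.2 : W) = w
    · rw [if_pos hp, if_pos (by exact hcond.mpr hp)]
    · rw [if_neg hp, if_neg (by exact fun hc => hp (hcond.mp hc))]
  rw [hre]
  by_cases hle : absLe cs (z⁻¹ * w * z) γ
  · have h2' : absLen cs (z⁻¹ * w * z) = 2 := by rw [absLen_conj]; exact h2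
    rw [RingQuot.mkAlgHom_rel ℤ (NCRel.sum _ h2' hle), map_zero]
  · rw [map_sum]
    refine Finset.sum_eq_zero ?_
    intro q _
    by_cases hq : (q.1 : W) * (q.2 : W) = z⁻¹ * w * z
    · rw [if_pos hq, RingQuot.mkAlgHom_rel ℤ (NCRel.ncross q.1 q.2 (by rw [hq]; exact hle)),
        map_zero]
    · rw [if_neg hq, map_zero]

lemma mono_ctx (u v : List (Refl cs)) (p₁ p₂ : Refl cs) :
    mono cs u * ((FreeAlgebra.ι ℤ p₁ * FreeAlgebra.ι ℤ p₂) * mono cs v)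
      = mono cs (u ++ p₁ :: p₂ :: v) := by
  rw [mono_append, mono_cons, mono_cons]
  simp only [mul_assoc]

lemma sum_ite_factor {ι : Type*} [Fintype ι] (c : ι → Prop) (X Y : FreeAlgebra ℤ (Refl cs))
    (f : ι → FreeAlgebra ℤ (Refl cs)) :
    ∑ p : ι, (if c p then X * (f p * Y) else 0)
      = X * ((∑ p : ι, if c p then f p else 0) * Y) := by
  rw [Finset.sum_mul, Finset.mul_sum]
  refine Finset.sum_congr rfl fun p _ => ?_
  split_ifs with h <;> simp

/-- expansion of `dW` on a word with a distinguished adjacent pair -/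
lemma dW_ctx (u v : List (Refl cs)) (p₁ p₂ : Refl cs) :
    dW cs (u ++ p₁ :: p₂ :: v)
      = dW cs u * ((FreeAlgebra.ι ℤ p₁ * FreeAlgebra.ι ℤ p₂) * mono cs v)
        + ((-1 : ℤ) ^ u.length) • (mono cs u * (FreeAlgebra.ι ℤ p₂ * mono cs v))
        - ((-1 : ℤ) ^ u.length) • (mono cs u * (FreeAlgebra.ι ℤ p₁ * mono cs v))
        + ((-1 : ℤ) ^ u.length) • (mono cs u * ((FreeAlgebra.ι ℤ p₁ * FreeAlgebra.ι ℤ p₂) * dW cs v)) := by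
  rw [dW_append, dW_cons, dW_cons, mono_cons, mono_cons]
  simp only [mul_sub, mul_add, smul_sub, smul_add, sub_mul, mul_assoc]
  abel

/-- expansion of `delW` on a word with a distinguished adjacent pair -/
lemma delW_ctx (u v : List (Refl cs)) (p₁ p₂ : Refl cs) :
    delW cs (u ++ p₁ :: p₂ :: v)
      = delW cs u * ((FreeAlgebra.ι ℤ p₁ * FreeAlgebra.ι ℤ p₂) * mono cs v)
        + ((-1 : ℤ) ^ u.length) • (mono cs (cmap cs (p₁ : W) u) * (FreeAlgebra.ι ℤ p₂ * mono cs v))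
        - ((-1 : ℤ) ^ u.length) • (mono cs (cmap cs (p₂ : W) u)
            * (FreeAlgebra.ι ℤ (conjR p₁ (p₂ : W)) * mono cs v))
        + ((-1 : ℤ) ^ u.length) • Tg cs (u ++ [p₁, p₂]) v := by
  rw [delW_append, Tg_cons, Tg_cons]
  have h1 : cmap cs (p₁ : W) u ++ p₂ :: v = cmap cs (p₁ : W) u ++ p₂ :: v := rfl
  have h2 : mono cs (cmap cs (p₁ : W) u ++ p₂ :: v)
      = mono cs (cmap cs (p₁ : W) u) * (FreeAlgebra.ι ℤ p₂ * mono cs v) := by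
    rw [mono_append, mono_cons]
  have h3 : cmap cs (p₂ : W) (u ++ [p₁]) = cmap cs (p₂ : W) u ++ [conjR p₁ (p₂ : W)] := by
    simp [cmap]
  have h4 : mono cs (cmap cs (p₂ : W) (u ++ [p₁]) ++ v)
      = mono cs (cmap cs (p₂ : W) u) * (FreeAlgebra.ι ℤ (conjR p₁ (p₂ : W)) * mono cs v) := by
    rw [h3, List.append_assoc, mono_append, List.singleton_append, mono_cons]
  have h5 : (u ++ [p₁]) ++ [p₂] = u ++ [p₁, p₂] := by
    rw [List.append_assoc]
    rfl
  rw [h2, h4, h5, mono_cons, mono_cons]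
  simp only [smul_sub, smul_add, sub_sub_eq_add_sub, mul_assoc]
  abel

lemma conj_prod (p q : Refl cs) :
    ((conjR q (p : W) : Refl cs) : W) * (p : W) = (p : W) * (q : W) := by
  show ((p : W)⁻¹ * q * p) * p = _
  rw [mul_assoc, p.2.mul_self, mul_one, p.2.inv]

/-- the first components and second components of product factorizations agree as sums -/
lemma S1_eq_S2 (w : W) :
    (∑ p : Refl cs × Refl cs, if (p.1 : W) * (p.2 : W) = w then FreeAlgebra.ι ℤ p.1 else 0)
      = ∑ p : Refl cs × Refl cs,
          if (p.1 : W) * (p.2 : W) = w then FreeAlgebra.ι ℤ p.2 else 0 := by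
  refine Fintype.sum_equiv (pairConj cs).symm _ _ ?_
  intro p
  simp only [pairConj_symm_apply]
  by_cases hp : (p.1 : W) * (p.2 : W) = w
  · rw [if_pos hp]; simp only [conj_prod, if_pos hp]
  · rw [if_neg hp]; simp only [conj_prod, if_neg hp]

/-- the middle-term cancellation for `δ` -/
lemma BC_del (u v : List (Refl cs)) (w : W) :
    (∑ p : Refl cs × Refl cs, if (p.1 : W) * (p.2 : W) = w then
        mono cs (cmap cs (p.1 : W) u) * (FreeAlgebra.ι ℤ p.2 * mono cs v) else 0)
      = ∑ p : Refl cs × Refl cs, if (p.1 : W) * (p.2 : W) = w then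
          mono cs (cmap cs (p.2 : W) u) * (FreeAlgebra.ι ℤ (conjR p.1 (p.2 : W)) * mono cs v)
        else 0 := by
  refine Fintype.sum_equiv (pairConj cs).symm _ _ ?_
  intro p
  simp only [pairConj_symm_apply]
  by_cases hp : (p.1 : W) * (p.2 : W) = w
  · rw [if_pos hp]; simp only [conj_prod, if_pos hp, conjR_conjR_self]
  · rw [if_neg hp]; simp only [conj_prod, if_neg hp]

/-- `π` kills the `Tg`-sums over factorizations -/
lemma pi_Tg_sum (u v : List (Refl cs)) {w : W} (h2 : absLen cs w = 2) :
    RingQuot.mkAlgHom ℤ (NCRel cs γ)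
      (∑ p : Refl cs × Refl cs,
        if (p.1 : W) * (p.2 : W) = w then Tg cs (u ++ [p.1, p.2]) v else 0) = 0 := by
  have hswap : (∑ p : Refl cs × Refl cs,
        if (p.1 : W) * (p.2 : W) = w then Tg cs (u ++ [p.1, p.2]) v else 0)
      = ∑ j ∈ Finset.range v.length, ((-1 : ℤ) ^ j) •
          (∑ p : Refl cs × Refl cs,
            if (p.1 : W) * (p.2 : W) = w then mono cs (TgIdx cs (u ++ [p.1, p.2]) v j) else 0) := by
    have hlen : ∀ p₁ p₂ : Refl cs, (u ++ [p₁, p₂]).length = u.length + 2 := by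
      intros; simp
    have h1 : ∀ p : Refl cs × Refl cs,
        (if (p.1 : W) * (p.2 : W) = w then Tg cs (u ++ [p.1, p.2]) v else 0)
        = ∑ j ∈ Finset.range v.length, (if (p.1 : W) * (p.2 : W) = w then
            ((-1 : ℤ) ^ j) • mono cs (TgIdx cs (u ++ [p.1, p.2]) v j) else 0) := by
      intro p
      split_ifs with hp
      · rw [Tg]
      · simp
    rw [Finset.sum_congr rfl (fun p _ => h1 p), Finset.sum_comm]
    refine Finset.sum_congr rfl fun j _ => ?_
    rw [Finset.smul_sum]
    refine Finset.sum_congr rfl fun p _ => ?_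
    split_ifs with hp
    · rfl
    · rw [smul_zero]
  rw [hswap, map_sum]
  refine Finset.sum_eq_zero fun j hj => ?_
  have hj' : j < v.length := Finset.mem_range.mp hj
  rw [map_smul]
  have hfac : (∑ p : Refl cs × Refl cs,
      if (p.1 : W) * (p.2 : W) = w then mono cs (TgIdx cs (u ++ [p.1, p.2]) v j) else 0)
      = mono cs (cmap cs ((v.get ⟨j, hj'⟩ : Refl cs) : W) u) *
          ((∑ p : Refl cs × Refl cs, if (p.1 : W) * (p.2 : W) = w then
            FreeAlgebra.ι ℤ (conjR p.1 ((v.get ⟨j, hj'⟩ : Refl cs) : W)) *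
              FreeAlgebra.ι ℤ (conjR p.2 ((v.get ⟨j, hj'⟩ : Refl cs) : W)) else 0)
            * mono cs (delIdxN cs v j)) := by
    rw [← sum_ite_factor]
    refine Finset.sum_congr rfl fun p _ => ?_
    have hT : TgIdx cs (u ++ [p.1, p.2]) v j
        = cmap cs ((v.get ⟨j, hj'⟩ : Refl cs) : W) u ++
            conjR p.1 ((v.get ⟨j, hj'⟩ : Refl cs) : W) ::
            conjR p.2 ((v.get ⟨j, hj'⟩ : Refl cs) : W) :: delIdxN cs v j := by
      rw [TgIdx_eq cs _ v hj']
      simp [cmap]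
    split_ifs with hp
    · rw [hT, ← mono_ctx]
    · rfl
  rw [hfac, map_mul, map_mul, pi_Xi cs γ h2, zero_mul, mul_zero]
  exact smul_zero _

end NCAux
namespace NCAux

variable {B : Type*} {W : Type*} [Group W] {M : CoxeterMatrix B} (cs : CoxeterSystem M W)
variable [Fintype W] (γ : W)

lemma smul_ite_sum {ι : Type*} [Fintype ι] (c : ι → Prop) (e : ℤ)
    (g : ι → FreeAlgebra ℤ (Refl cs)) :
    (∑ p : ι, if c p then e • g p else 0) = e • ∑ p : ι, (if c p then g p else 0) := by
  rw [Finset.smul_sum]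
  refine Finset.sum_congr rfl fun p _ => ?_
  split_ifs with hp
  · rfl
  · rw [smul_zero]

lemma pi_dF_sum (u v : List (Refl cs)) {w : W} (h2 : absLen cs w = 2) (hw : absLe cs w γ) :
    RingQuot.mkAlgHom ℤ (NCRel cs γ) (dF cs γ (∑ p : Refl cs × Refl cs,
      if (p.1 : W) * (p.2 : W) = w then mono cs (u ++ p.1 :: p.2 :: v) else 0)) = 0 := by
  rw [map_sum, map_sum]
  by_cases hC : absLen cs (pr cs u * (w * pr cs v)) = u.length + v.length + 2 ∧
      absLe cs (pr cs u * (w * pr cs v)) γ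
  case neg =>
    refine Finset.sum_eq_zero fun p _ => ?_
    by_cases hp : (p.1 : W) * (p.2 : W) = w
    · rw [if_pos hp, dF_mono, if_neg (fun hNC => hC ((NC_pair_iff cs u v hp).mp hNC)), map_zero]
    · rw [if_neg hp, map_zero, map_zero]
  case pos =>
    have hstep : ∀ p : Refl cs × Refl cs,
        RingQuot.mkAlgHom ℤ (NCRel cs γ) (dF cs γ
            (if (p.1 : W) * (p.2 : W) = w then mono cs (u ++ p.1 :: p.2 :: v) else 0))
        = ((-1 : ℤ) ^ (u.length + v.length + 1)) •
            RingQuot.mkAlgHom ℤ (NCRel cs γ)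
              (if (p.1 : W) * (p.2 : W) = w then dW cs (u ++ p.1 :: p.2 :: v) else 0) := by
      intro p
      by_cases hp : (p.1 : W) * (p.2 : W) = w
      · rw [if_pos hp, if_pos hp, dF_mono, if_pos ((NC_pair_iff cs u v hp).mpr hC), dFull_eq]
        have hl : (u ++ p.1 :: p.2 :: v).length = u.length + v.length + 2 := by simp; omega
        rw [hl, show u.length + v.length + 2 - 1 = u.length + v.length + 1 from by omega,
          map_smul]
      · rw [if_neg hp, if_neg hp]
        simp
    rw [Finset.sum_congr rfl (fun p _ => hstep p)]
    erw [← Finset.smul_sum]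
    rw [← map_sum]
    have h4 : ∀ p : Refl cs × Refl cs,
        (if (p.1 : W) * (p.2 : W) = w then dW cs (u ++ p.1 :: p.2 :: v) else 0)
        = (if (p.1 : W) * (p.2 : W) = w then
              dW cs u * ((FreeAlgebra.ι ℤ p.1 * FreeAlgebra.ι ℤ p.2) * mono cs v) else 0)
          + (if (p.1 : W) * (p.2 : W) = w then
              ((-1 : ℤ) ^ u.length) • (mono cs u * (FreeAlgebra.ι ℤ p.2 * mono cs v)) else 0)
          - (if (p.1 : W) * (p.2 : W) = w then
              ((-1 : ℤ) ^ u.length) • (mono cs u * (FreeAlgebra.ι ℤ p.1 * mono cs v)) else 0)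
          + (if (p.1 : W) * (p.2 : W) = w then
              ((-1 : ℤ) ^ u.length) •
                (mono cs u * ((FreeAlgebra.ι ℤ p.1 * FreeAlgebra.ι ℤ p.2) * dW cs v)) else 0) := by
      intro p
      split_ifs with hp
      · rw [dW_ctx]
      · simp
    rw [Finset.sum_congr rfl (fun p _ => h4 p), Finset.sum_add_distrib, Finset.sum_sub_distrib,
      Finset.sum_add_distrib, smul_ite_sum, smul_ite_sum, smul_ite_sum,
      sum_ite_factor, sum_ite_factor, sum_ite_factor, sum_ite_factor, S1_eq_S2 cs w]
    simp [map_add, map_sub, map_mul, map_smul, pi_rel_sum cs γ h2 hw]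

lemma pi_delF_sum (u v : List (Refl cs)) {w : W} (h2 : absLen cs w = 2) (hw : absLe cs w γ) :
    RingQuot.mkAlgHom ℤ (NCRel cs γ) (delF cs γ (∑ p : Refl cs × Refl cs,
      if (p.1 : W) * (p.2 : W) = w then mono cs (u ++ p.1 :: p.2 :: v) else 0)) = 0 := by
  rw [map_sum, map_sum]
  by_cases hC : absLen cs (pr cs u * (w * pr cs v)) = u.length + v.length + 2 ∧
      absLe cs (pr cs u * (w * pr cs v)) γ
  case neg =>
    refine Finset.sum_eq_zero fun p _ => ?_
    by_cases hp : (p.1 : W) * (p.2 : W) = w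
    · rw [if_pos hp, delF_mono, if_neg (fun hNC => hC ((NC_pair_iff cs u v hp).mp hNC)), map_zero]
    · rw [if_neg hp, map_zero, map_zero]
  case pos =>
    have hstep : ∀ p : Refl cs × Refl cs,
        RingQuot.mkAlgHom ℤ (NCRel cs γ) (delF cs γ
            (if (p.1 : W) * (p.2 : W) = w then mono cs (u ++ p.1 :: p.2 :: v) else 0))
        = RingQuot.mkAlgHom ℤ (NCRel cs γ)
              (if (p.1 : W) * (p.2 : W) = w then delW cs (u ++ p.1 :: p.2 :: v) else 0) := by
      intro p
      by_cases hp : (p.1 : W) * (p.2 : W) = w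
      · rw [if_pos hp, if_pos hp, delF_mono, if_pos ((NC_pair_iff cs u v hp).mpr hC)]
      · rw [if_neg hp, if_neg hp, map_zero]
    rw [Finset.sum_congr rfl (fun p _ => hstep p), ← map_sum]
    have h4 : ∀ p : Refl cs × Refl cs,
        (if (p.1 : W) * (p.2 : W) = w then delW cs (u ++ p.1 :: p.2 :: v) else 0)
        = (if (p.1 : W) * (p.2 : W) = w then
              delW cs u * ((FreeAlgebra.ι ℤ p.1 * FreeAlgebra.ι ℤ p.2) * mono cs v) else 0)
          + (if (p.1 : W) * (p.2 : W) = w then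
              ((-1 : ℤ) ^ u.length) • (mono cs (cmap cs (p.1 : W) u)
                * (FreeAlgebra.ι ℤ p.2 * mono cs v)) else 0)
          - (if (p.1 : W) * (p.2 : W) = w then
              ((-1 : ℤ) ^ u.length) • (mono cs (cmap cs (p.2 : W) u)
                * (FreeAlgebra.ι ℤ (conjR p.1 (p.2 : W)) * mono cs v)) else 0)
          + (if (p.1 : W) * (p.2 : W) = w then
              ((-1 : ℤ) ^ u.length) • Tg cs (u ++ [p.1, p.2]) v else 0) := by
      intro p
      split_ifs with hp
      · rw [delW_ctx]
      · simp
    rw [Finset.sum_congr rfl (fun p _ => h4 p), Finset.sum_add_distrib, Finset.sum_sub_distrib,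
      Finset.sum_add_distrib, smul_ite_sum, smul_ite_sum, smul_ite_sum,
      sum_ite_factor, BC_del cs u v w]
    simp only [map_add, map_sub, map_mul, map_smul, pi_rel_sum cs γ h2 hw,
      pi_Tg_sum cs γ u v h2, zero_mul, mul_zero, smul_zero, sub_self, add_zero, zero_add]
    erw [map_smul, pi_Tg_sum cs γ u v h2]
    exact smul_zero _

lemma hz_rewrite (u v : List (Refl cs)) (w : W) :
    mono cs u * ((∑ p : Refl cs × Refl cs,
        if (p.1 : W) * (p.2 : W) = w then
          FreeAlgebra.ι ℤ p.1 * FreeAlgebra.ι ℤ p.2 else 0) - 0) * mono cs v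
      = ∑ p : Refl cs × Refl cs,
          if (p.1 : W) * (p.2 : W) = w then mono cs (u ++ p.1 :: p.2 :: v) else 0 := by
  rw [sub_zero, Finset.mul_sum, Finset.sum_mul]
  refine Finset.sum_congr rfl fun p _ => ?_
  split_ifs with hp
  · rw [← mono_ctx]
    simp only [mul_assoc]
  · simp

lemma pi_dF_J : ∀ x ∈ J cs γ,
    RingQuot.mkAlgHom ℤ (NCRel cs γ) (dF cs γ x) = 0 := by
  intro x hx
  induction hx using Submodule.span_induction with
  | mem z hz =>
      obtain ⟨u, v, a, b, hab, rfl⟩ := hz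
      cases hab with
      | sq t =>
          have h1 : mono cs u * (FreeAlgebra.ι ℤ t * FreeAlgebra.ι ℤ t - 0) * mono cs v
              = mono cs (u ++ t :: t :: v) := by
            rw [sub_zero, ← mono_ctx]
            simp only [mul_assoc]
          rw [h1, dF_mono, if_neg (notNC_sq cs u v t), map_zero]
      | ncross t₁ t₂ h =>
          have h1 : mono cs u * (FreeAlgebra.ι ℤ t₁ * FreeAlgebra.ι ℤ t₂ - 0) * mono cs v
              = mono cs (u ++ t₁ :: t₂ :: v) := by
            rw [sub_zero, ← mono_ctx]
            simp only [mul_assoc]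
          rw [h1, dF_mono, if_neg (fun hNC => h (NC_pair cs hNC)), map_zero]
      | sum w h2 hw =>
          rw [hz_rewrite]
          exact pi_dF_sum cs γ u v h2 hw
  | zero => rw [map_zero, map_zero]
  | add x y hx hy ihx ihy => rw [map_add, map_add, ihx, ihy, add_zero]
  | smul r x hx ihx => rw [map_smul, map_smul, ihx]; exact smul_zero _

lemma pi_delF_J : ∀ x ∈ J cs γ,
    RingQuot.mkAlgHom ℤ (NCRel cs γ) (delF cs γ x) = 0 := by
  intro x hx
  induction hx using Submodule.span_induction with
  | mem z hz =>
      obtain ⟨u, v, a, b, hab, rfl⟩ := hz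
      cases hab with
      | sq t =>
          have h1 : mono cs u * (FreeAlgebra.ι ℤ t * FreeAlgebra.ι ℤ t - 0) * mono cs v
              = mono cs (u ++ t :: t :: v) := by
            rw [sub_zero, ← mono_ctx]
            simp only [mul_assoc]
          rw [h1, delF_mono, if_neg (notNC_sq cs u v t), map_zero]
      | ncross t₁ t₂ h =>
          have h1 : mono cs u * (FreeAlgebra.ι ℤ t₁ * FreeAlgebra.ι ℤ t₂ - 0) * mono cs v
              = mono cs (u ++ t₁ :: t₂ :: v) := by
            rw [sub_zero, ← mono_ctx]
            simp only [mul_assoc]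
          rw [h1, delF_mono, if_neg (fun hNC => h (NC_pair cs hNC)), map_zero]
      | sum w h2 hw =>
          rw [hz_rewrite]
          exact pi_delF_sum cs γ u v h2 hw
  | zero => rw [map_zero, map_zero]
  | add x y hx hy ihx ihy => rw [map_add, map_add, ihx, ihy, add_zero]
  | smul r x hx ihx => rw [map_smul, map_smul, ihx]; exact smul_zero _

end NCAux
namespace NCAux

variable {B : Type*} {W : Type*} [Group W] {M : CoxeterMatrix B} (cs : CoxeterSystem M W)
variable [Fintype W] (γ : W)

lemma dF_dF_mono (l : List (Refl cs)) : dF cs γ (dF cs γ (mono cs l)) = 0 := by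
  rw [dF_mono]
  by_cases hNC : IsNCWord cs γ l
  · rw [if_pos hNC, dFull_eq, map_smul, dW, map_sum]
    have hterm : ∀ i ∈ Finset.range l.length,
        dF cs γ (((-1 : ℤ) ^ i) • mono cs (l.eraseIdx i))
        = ((-1 : ℤ) ^ (l.length - 1 - 1)) • (((-1 : ℤ) ^ i) • dW cs (l.eraseIdx i)) := by
      intro i hi
      have hi' : i < l.length := Finset.mem_range.mp hi
      rw [map_smul, dF_mono, if_pos (NC_eraseIdx cs hNC hi'), dFull_eq,
        List.length_eraseIdx_of_lt hi', smul_comm]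
    rw [Finset.sum_congr rfl hterm, ← Finset.smul_sum, identity_E1, smul_zero, smul_zero]
  · rw [if_neg hNC, map_zero]

lemma delF_delF_mono (l : List (Refl cs)) : delF cs γ (delF cs γ (mono cs l)) = 0 := by
  rw [delF_mono]
  by_cases hNC : IsNCWord cs γ l
  · rw [if_pos hNC, delW, map_sum]
    have hterm : ∀ i ∈ Finset.range l.length,
        delF cs γ (((-1 : ℤ) ^ i) • mono cs (delIdxN cs l i))
        = ((-1 : ℤ) ^ i) • delW cs (delIdxN cs l i) := by
      intro i hi
      have hi' : i < l.length := Finset.mem_range.mp hi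
      rw [map_smul, delF_mono, if_pos (NC_delIdxN cs hNC hi')]
    rw [Finset.sum_congr rfl hterm, identity_E2]
  · rw [if_neg hNC, map_zero]

lemma dF_delF_mono (l : List (Refl cs)) :
    dF cs γ (delF cs γ (mono cs l)) = delF cs γ (dF cs γ (mono cs l)) := by
  by_cases hNC : IsNCWord cs γ l
  swap
  · rw [delF_mono, if_neg hNC, dF_mono, if_neg hNC, map_zero, map_zero]
  rw [delF_mono, if_pos hNC, dF_mono, if_pos hNC, dFull_eq, map_smul,
    delW, map_sum, dW, map_sum, Finset.smul_sum]
  have hL : ∀ i ∈ Finset.range l.length,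
      dF cs γ (((-1 : ℤ) ^ i) • mono cs (delIdxN cs l i))
      = ((-1 : ℤ) ^ (l.length - 1 - 1)) • (((-1 : ℤ) ^ i) • dW cs (delIdxN cs l i)) := by
    intro i hi
    have hi' : i < l.length := Finset.mem_range.mp hi
    rw [map_smul, dF_mono, if_pos (NC_delIdxN cs hNC hi'), dFull_eq,
      length_delIdxN cs l hi', smul_comm]
  have hR : ∀ i ∈ Finset.range l.length,
      ((-1 : ℤ) ^ (l.length - 1)) • delF cs γ (((-1 : ℤ) ^ i) • mono cs (l.eraseIdx i))
      = ((-1 : ℤ) ^ (l.length - 1)) • (((-1 : ℤ) ^ i) • delW cs (l.eraseIdx i)) := by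
    intro i hi
    have hi' : i < l.length := Finset.mem_range.mp hi
    rw [map_smul, delF_mono, if_pos (NC_eraseIdx cs hNC hi')]
  rw [Finset.sum_congr rfl hL, Finset.sum_congr rfl hR, ← Finset.smul_sum, ← Finset.smul_sum]
  have hE3 : (∑ i ∈ Finset.range l.length, ((-1 : ℤ) ^ i) • dW cs (delIdxN cs l i))
      = - ∑ i ∈ Finset.range l.length, ((-1 : ℤ) ^ i) • delW cs (l.eraseIdx i) :=
    eq_neg_of_add_eq_zero_left (identity_E3 cs l)
  rw [hE3, smul_neg]
  by_cases hk : l.length ≤ 1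
  · have hzero : (∑ i ∈ Finset.range l.length, ((-1 : ℤ) ^ i) • delW cs (l.eraseIdx i)) = 0 := by
      refine Finset.sum_eq_zero fun i hi => ?_
      have hi' : i < l.length := Finset.mem_range.mp hi
      have h1 : (l.eraseIdx i).length = 0 := by
        rw [List.length_eraseIdx_of_lt hi']
        omega
      rw [List.length_eq_zero_iff] at h1
      rw [h1, delW_nil, smul_zero]
    rw [hzero, smul_zero, smul_zero, neg_zero]
  · obtain ⟨m, hm⟩ : ∃ m, l.length = m + 2 := ⟨l.length - 2, by omega⟩
    rw [hm]
    have e1 : m + 2 - 1 - 1 = m := by omega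
    have e2 : m + 2 - 1 = m + 1 := by omega
    rw [e1, e2, pow_succ, mul_smul]
    rw [show ((-1 : ℤ)) • (∑ i ∈ Finset.range (m + 2), ((-1 : ℤ) ^ i) • delW cs (l.eraseIdx i))
        = -(∑ i ∈ Finset.range (m + 2), ((-1 : ℤ) ^ i) • delW cs (l.eraseIdx i)) from
      neg_one_smul ℤ _, smul_neg]

lemma dF_dF (y : FreeAlgebra ℤ (Refl cs)) : dF cs γ (dF cs γ y) = 0 := by
  have hy : y ∈ Submodule.span ℤ (Set.range (fun l : List (Refl cs) => mono cs l)) := by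
    rw [mono_span_top]; trivial
  induction hy using Submodule.span_induction with
  | mem z hz => obtain ⟨l, rfl⟩ := hz; exact dF_dF_mono cs γ l
  | zero => rw [map_zero, map_zero]
  | add x y hx hy ihx ihy => rw [map_add, map_add, ihx, ihy, add_zero]
  | smul r x hx ihx => rw [map_smul, map_smul, ihx, smul_zero]

lemma delF_delF (y : FreeAlgebra ℤ (Refl cs)) : delF cs γ (delF cs γ y) = 0 := by
  have hy : y ∈ Submodule.span ℤ (Set.range (fun l : List (Refl cs) => mono cs l)) := by
    rw [mono_span_top]; trivial
  induction hy using Submodule.span_induction with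
  | mem z hz => obtain ⟨l, rfl⟩ := hz; exact delF_delF_mono cs γ l
  | zero => rw [map_zero, map_zero]
  | add x y hx hy ihx ihy => rw [map_add, map_add, ihx, ihy, add_zero]
  | smul r x hx ihx => rw [map_smul, map_smul, ihx, smul_zero]

lemma dF_delF (y : FreeAlgebra ℤ (Refl cs)) :
    dF cs γ (delF cs γ y) = delF cs γ (dF cs γ y) := by
  have hy : y ∈ Submodule.span ℤ (Set.range (fun l : List (Refl cs) => mono cs l)) := by
    rw [mono_span_top]; trivial
  induction hy using Submodule.span_induction with
  | mem z hz => obtain ⟨l, rfl⟩ := hz; exact dF_delF_mono cs γ l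
  | zero => simp
  | add x y hx hy ihx ihy => rw [map_add, map_add, map_add, map_add, ihx, ihy]
  | smul r x hx ihx => rw [map_smul, map_smul, map_smul, map_smul, ihx]

/-! ### descent to the quotient -/

noncomputable def piL : FreeAlgebra ℤ (Refl cs) →ₗ[ℤ] RingQuot (NCRel cs γ) :=
  (RingQuot.mkAlgHom ℤ (NCRel cs γ)).toLinearMap

lemma piL_apply (x : FreeAlgebra ℤ (Refl cs)) :
    piL cs γ x = RingQuot.mkAlgHom ℤ (NCRel cs γ) x := rfl

lemma piL_surj : Function.Surjective (piL cs γ) := by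
  intro y
  obtain ⟨x, hx⟩ := RingQuot.mkAlgHom_surjective ℤ (NCRel cs γ) y
  exact ⟨x, hx⟩

lemma ker_le_dF :
    LinearMap.ker (piL cs γ) ≤ LinearMap.ker ((piL cs γ) ∘ₗ dF cs γ) := by
  intro x hx
  rw [LinearMap.mem_ker] at hx ⊢
  rw [LinearMap.comp_apply, piL_apply]
  exact pi_dF_J cs γ x (mem_J_of_pi_eq_zero cs γ hx)

lemma ker_le_delF :
    LinearMap.ker (piL cs γ) ≤ LinearMap.ker ((piL cs γ) ∘ₗ delF cs γ) := by
  intro x hx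
  rw [LinearMap.mem_ker] at hx ⊢
  rw [LinearMap.comp_apply, piL_apply]
  exact pi_delF_J cs γ x (mem_J_of_pi_eq_zero cs γ hx)

noncomputable def dQ : RingQuot (NCRel cs γ) →ₗ[ℤ] RingQuot (NCRel cs γ) :=
  (Submodule.liftQ _ ((piL cs γ) ∘ₗ dF cs γ) (ker_le_dF cs γ)) ∘ₗ
    ((piL cs γ).quotKerEquivOfSurjective (piL_surj cs γ)).symm.toLinearMap

noncomputable def delQ : RingQuot (NCRel cs γ) →ₗ[ℤ] RingQuot (NCRel cs γ) :=
  (Submodule.liftQ _ ((piL cs γ) ∘ₗ delF cs γ) (ker_le_delF cs γ)) ∘ₗ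
    ((piL cs γ).quotKerEquivOfSurjective (piL_surj cs γ)).symm.toLinearMap

lemma equiv_symm_pi (x : FreeAlgebra ℤ (Refl cs)) :
    ((piL cs γ).quotKerEquivOfSurjective (piL_surj cs γ)).symm (piL cs γ x)
      = Submodule.Quotient.mk x := by
  rw [LinearEquiv.symm_apply_eq]
  rfl

lemma dQ_pi (x : FreeAlgebra ℤ (Refl cs)) :
    dQ cs γ (piL cs γ x) = piL cs γ (dF cs γ x) := by
  rw [dQ, LinearMap.comp_apply]
  rw [show (((piL cs γ).quotKerEquivOfSurjective (piL_surj cs γ)).symm.toLinearMap)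
      (piL cs γ x) = Submodule.Quotient.mk x from equiv_symm_pi cs γ x]
  rw [Submodule.liftQ_apply, LinearMap.comp_apply]

lemma delQ_pi (x : FreeAlgebra ℤ (Refl cs)) :
    delQ cs γ (piL cs γ x) = piL cs γ (delF cs γ x) := by
  rw [delQ, LinearMap.comp_apply]
  rw [show (((piL cs γ).quotKerEquivOfSurjective (piL_surj cs γ)).symm.toLinearMap)
      (piL cs γ x) = Submodule.Quotient.mk x from equiv_symm_pi cs γ x]
  rw [Submodule.liftQ_apply, LinearMap.comp_apply]

end NCAux
open NCAux in
/-- On the noncrossing algebra `𝒜` of a finite Coxeter group `W` with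
Coxeter element `γ`, the truncation maps `d` and `δ` given on (reduced, `≤ γ`) monomials
by `d(a_{t₁}⋯a_{t_k}) = Σ_i (−1)^{k−i} a_{t₁}⋯â_{t_i}⋯a_{t_k}` and
`δ(a_{t₁}⋯a_{t_k}) = Σ_i (−1)^{i−1} a_{t₁^{t_i}}⋯a_{t_{i−1}^{t_i}} â_{t_i}
a_{t_{i+1}}⋯a_{t_k}` are well-defined, and satisfy `d² = 0`, `δ² = 0` and `dδ = δd`. -/
theorem noncrossing_d_delta (B : Type*) (W : Type*) [Group W] [Fintype W]
    (M : CoxeterMatrix B) (cs : CoxeterSystem M W)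
    (γ : W)
    (hγ : ∃ ω : List B, ω.Nodup ∧ (∀ b : B, b ∈ ω) ∧ γ = cs.wordProd ω) :
    ∃ d δ : RingQuot (NCRel cs γ) →ₗ[ℤ] RingQuot (NCRel cs γ),
      (∀ l : List (Refl cs), IsNCWord cs γ l →
        d (RingQuot.mkAlgHom ℤ (NCRel cs γ) (mono cs l)) =
          ∑ i : Fin l.length, ((-1 : ℤ) ^ (l.length - 1 - (i : ℕ))) •
            RingQuot.mkAlgHom ℤ (NCRel cs γ) (mono cs (l.eraseIdx (i : ℕ)))) ∧
      (∀ l : List (Refl cs), IsNCWord cs γ l →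
        δ (RingQuot.mkAlgHom ℤ (NCRel cs γ) (mono cs l)) =
          ∑ i : Fin l.length, ((-1 : ℤ) ^ (i : ℕ)) •
            RingQuot.mkAlgHom ℤ (NCRel cs γ)
              (mono cs ((l.take (i : ℕ)).map (fun s => conjR s (l.get i : W))
                ++ l.drop ((i : ℕ) + 1)))) ∧
      d ∘ₗ d = 0 ∧ δ ∘ₗ δ = 0 ∧ d ∘ₗ δ = δ ∘ₗ d := by
  classical
  refine ⟨dQ cs γ, delQ cs γ, ?_, ?_, ?_, ?_, ?_⟩
  · intro l hNC
    rw [show RingQuot.mkAlgHom ℤ (NCRel cs γ) (mono cs l) = piL cs γ (mono cs l) from rfl,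
      dQ_pi, piL_apply, dF_mono, if_pos hNC, dFull, map_sum]
    rw [Finset.sum_congr rfl (fun i (_ : i ∈ Finset.range l.length) =>
      (map_smul (RingQuot.mkAlgHom ℤ (NCRel cs γ)) ((-1 : ℤ) ^ (l.length - 1 - i))
        (mono cs (l.eraseIdx i))))]
    erw [← Fin.sum_univ_eq_sum_range (fun i : ℕ => ((-1 : ℤ) ^ (l.length - 1 - i)) •
      RingQuot.mkAlgHom ℤ (NCRel cs γ) (mono cs (l.eraseIdx i)))]
  · intro l hNC
    rw [show RingQuot.mkAlgHom ℤ (NCRel cs γ) (mono cs l) = piL cs γ (mono cs l) from rfl,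
      delQ_pi, piL_apply, delF_mono, if_pos hNC, delW, map_sum]
    rw [Finset.sum_congr rfl (fun i (_ : i ∈ Finset.range l.length) =>
      (map_smul (RingQuot.mkAlgHom ℤ (NCRel cs γ)) ((-1 : ℤ) ^ i)
        (mono cs (delIdxN cs l i))))]
    have hR : (∑ i : Fin l.length, ((-1 : ℤ) ^ (i : ℕ)) •
          RingQuot.mkAlgHom ℤ (NCRel cs γ)
            (mono cs ((l.take (i : ℕ)).map (fun s => conjR s (l.get i : W))
              ++ l.drop ((i : ℕ) + 1))))
        = ∑ i ∈ Finset.range l.length, ((-1 : ℤ) ^ i) •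
            RingQuot.mkAlgHom ℤ (NCRel cs γ) (mono cs (delIdxN cs l i)) := by
      rw [← Fin.sum_univ_eq_sum_range (fun i : ℕ => ((-1 : ℤ) ^ i) •
        RingQuot.mkAlgHom ℤ (NCRel cs γ) (mono cs (delIdxN cs l i)))]
      refine Finset.sum_congr rfl fun i _ => ?_
      congr 2
      rw [delIdxN_eq cs l i.isLt]
    rw [hR]
    exact rfl
  · apply LinearMap.ext
    intro x
    obtain ⟨y, rfl⟩ := piL_surj cs γ x
    rw [LinearMap.comp_apply, dQ_pi, dQ_pi, dF_dF, map_zero, LinearMap.zero_apply]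
  · apply LinearMap.ext
    intro x
    obtain ⟨y, rfl⟩ := piL_surj cs γ x
    rw [LinearMap.comp_apply, delQ_pi, delQ_pi, delF_delF, map_zero, LinearMap.zero_apply]
  · apply LinearMap.ext
    intro x
    obtain ⟨y, rfl⟩ := piL_surj cs γ x
    rw [LinearMap.comp_apply, LinearMap.comp_apply, delQ_pi, dQ_pi, dQ_pi, delQ_pi, dF_delF]
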